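/- arXiv:1501.05197 — 3 statements merged into one kernel-verified Lean document; each statement's English description precedes it below -/
import Mathlib

section
/- Let T be a tree with exactly one core v, which is a small core with three standard legs (so T has no regular cores). If L ⊆ V contains a local set for v and |L| ≤ 2, then L is a landmark set of T if and only if L consists of the two vertices of two short legs of v. -/
open SimpleGraph

variable {V : Type*} [Fintype V] [DecidableEq V]

/-- A vertex `τ` separates `u` and `w` if its distances to them differ. -/
def Separates (T : SimpleGraph V) (τ u w : V) : Prop :=
  T.dist τ u ≠ T.dist τ w

/-- There are at least two vertices of `L` separating `u` and `w`. -/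
def HasTwoSeparators (T : SimpleGraph V) (L : Set V) (u w : V) : Prop :=
  ∃ τ₁ ∈ L, ∃ τ₂ ∈ L, τ₁ ≠ τ₂ ∧ Separates T τ₁ u w ∧ Separates T τ₂ u w

/-- `L` is a landmark set (non-landmarks model, `k = 2`): every pair of distinct
vertices outside `L` is separated by at least two vertices of `L`. -/
def IsLandmarkSet (T : SimpleGraph V) (L : Set V) : Prop :=
  ∀ u w : V, u ≠ w → u ∉ L → w ∉ L → HasTwoSeparators T L u w

/-- A core is a vertex of degree at least 3. -/
def IsCore (T : SimpleGraph V) [DecidableRel T.Adj] (v : V) : Prop :=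
  3 ≤ T.degree v

/-- The subtree of the neighbor `x` of `v`: in a tree, the connected component of `x`
obtained by removing `v`, characterized via distances (`w` is in it iff the path from
`v` to `w` passes through `x`). -/
def Branch (T : SimpleGraph V) (v x : V) : Set V :=
  {w | T.dist v w = T.dist x w + 1}

/-- The subtree of the neighbor `x` of `v` is a (standard) leg:
a path containing no cores. -/
def IsStandardLeg (T : SimpleGraph V) [DecidableRel T.Adj] (v x : V) : Prop :=
  T.Adj v x ∧ ∀ w ∈ Branch T v x, T.degree w ≤ 2

/-- A short leg consists of a single vertex. -/
def IsShortLeg (T : SimpleGraph V) [DecidableRel T.Adj] (v x : V) : Prop :=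
  IsStandardLeg T v x ∧ Branch T v x = {x}

/-- A long leg is a standard leg that is not short. -/
def IsLongLeg (T : SimpleGraph V) [DecidableRel T.Adj] (v x : V) : Prop :=
  IsStandardLeg T v x ∧ Branch T v x ≠ {x}

/-- A small core: degree exactly 3, with at least two standard legs, one of which is short. -/
def IsSmallCore (T : SimpleGraph V) [DecidableRel T.Adj] (v : V) : Prop :=
  T.degree v = 3 ∧ ∃ x y : V, x ≠ y ∧ IsShortLeg T v x ∧ IsStandardLeg T v y

/-- A regular core is a core that is not small. -/
def IsRegularCore (T : SimpleGraph V) [DecidableRel T.Adj] (v : V) : Prop :=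
  IsCore T v ∧ ¬ IsSmallCore T v

/-- A modified leg of `v`: a subtree of a neighbor of `v` containing exactly one core,
which is a small core. -/
def IsModifiedLeg (T : SimpleGraph V) [DecidableRel T.Adj] (v x : V) : Prop :=
  T.Adj v x ∧ ∃ u ∈ Branch T v x, IsSmallCore T u ∧
    ∀ w ∈ Branch T v x, IsCore T w → w = u

/-- A g-leg is a standard leg or a modified leg. -/
def IsGLeg (T : SimpleGraph V) [DecidableRel T.Adj] (v x : V) : Prop :=
  IsStandardLeg T v x ∨ IsModifiedLeg T v x

/-- A minor core: a regular core which either (i) has at most one g-leg, or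
(ii) has degree at least 4, no modified legs, exactly two standard legs one of which
is short, and every other subtree of a neighbor contains a regular core. -/
def IsMinorCore (T : SimpleGraph V) [DecidableRel T.Adj] (v : V) : Prop :=
  IsRegularCore T v ∧
  ((∀ x y : V, IsGLeg T v x → IsGLeg T v y → x = y) ∨
   (4 ≤ T.degree v ∧ (∀ x : V, ¬ IsModifiedLeg T v x) ∧
    (∃ x y : V, x ≠ y ∧ IsShortLeg T v x ∧ IsStandardLeg T v y ∧
      ∀ z : V, IsStandardLeg T v z → z = x ∨ z = y) ∧
    (∀ z : V, T.Adj v z → ¬ IsGLeg T v z → ∃ w ∈ Branch T v z, IsRegularCore T w)))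

/-- A main core is a regular core that is not minor. -/
def IsMainCore (T : SimpleGraph V) [DecidableRel T.Adj] (v : V) : Prop :=
  IsRegularCore T v ∧ ¬ IsMinorCore T v

/-- The vertices lying on g-legs of `v`. -/
def GLegVerts (T : SimpleGraph V) [DecidableRel T.Adj] (v : V) : Set V :=
  {w | ∃ x : V, IsGLeg T v x ∧ w ∈ Branch T v x}

/-- Type (s,0) solution on the leg of neighbor `x` of `v`: the empty set. -/
def SolS0 (T : SimpleGraph V) (v x : V) (S : Set V) : Prop :=
  S ∩ Branch T v x = ∅

/-- Type (s,1) solution: one vertex of the leg whose position is at least 2. -/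
def SolS1 (T : SimpleGraph V) (v x : V) (S : Set V) : Prop :=
  ∃ w : V, S ∩ Branch T v x = {w} ∧ 2 ≤ T.dist v w

/-- Type (s,2) solution: at least two vertices of the leg. -/
def SolS2 (T : SimpleGraph V) (v x : V) (S : Set V) : Prop :=
  ∃ w₁ ∈ S ∩ Branch T v x, ∃ w₂ ∈ S ∩ Branch T v x, w₁ ≠ w₂

/-- Type (s,3) solution: exactly the vertex with position 1 (that is, `x`). -/
def SolS3 (T : SimpleGraph V) (v x : V) (S : Set V) : Prop :=
  S ∩ Branch T v x = {x}

/-- For a modified leg `x` of `v`: `u` is its small core (at position `T.dist v u`),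
and `a`, `b` are the two vertices at position `T.dist v u + 1`, where `b` is the
vertex of a short leg of `u` (the vertex `ℓ^b`) and `a` is the other one (`ℓ^a`). -/
def MLegPair (T : SimpleGraph V) [DecidableRel T.Adj] (v x u a b : V) : Prop :=
  u ∈ Branch T v x ∧ IsSmallCore T u ∧ a ≠ b ∧
  a ∈ Branch T v x ∧ b ∈ Branch T v x ∧
  T.dist v a = T.dist v u + 1 ∧ T.dist v b = T.dist v u + 1 ∧
  IsShortLeg T u b

/-- Type (m,1) solution on the modified leg `x` of `v`: either `{ℓ^a}` or `{ℓ^b}`. -/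
def SolM1 (T : SimpleGraph V) [DecidableRel T.Adj] (v x : V) (S : Set V) : Prop :=
  ∃ u a b : V, MLegPair T v x u a b ∧
    (S ∩ Branch T v x = {a} ∨ S ∩ Branch T v x = {b})

/-- Type (m,2) solution: contains neither `ℓ^a` nor `ℓ^b`, contains at least two
vertices of positions at least `i + 2`, and no vertex of position `i + 1`. -/
def SolM2 (T : SimpleGraph V) [DecidableRel T.Adj] (v x : V) (S : Set V) : Prop :=
  ∃ u a b : V, MLegPair T v x u a b ∧ a ∉ S ∧ b ∉ S ∧
    (∃ w₁ ∈ S ∩ Branch T v x, ∃ w₂ ∈ S ∩ Branch T v x, w₁ ≠ w₂ ∧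
      T.dist v u + 2 ≤ T.dist v w₁ ∧ T.dist v u + 2 ≤ T.dist v w₂) ∧
    ∀ w ∈ S ∩ Branch T v x, T.dist v w ≠ T.dist v u + 1

/-- Type (m,3) solution: at least two vertices, one of which is `ℓ^a` or `ℓ^b`. -/
def SolM3 (T : SimpleGraph V) [DecidableRel T.Adj] (v x : V) (S : Set V) : Prop :=
  ∃ u a b : V, MLegPair T v x u a b ∧
    (∃ w₁ ∈ S ∩ Branch T v x, ∃ w₂ ∈ S ∩ Branch T v x, w₁ ≠ w₂) ∧
    (a ∈ S ∨ b ∈ S)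

/-- `S` is a local set for the core `v`. -/
def IsLocalSet (T : SimpleGraph V) [DecidableRel T.Adj] (v : V) (S : Set V) : Prop :=
  S ⊆ GLegVerts T v ∧
  -- (1) at most one standard leg has a type (s,0) solution, and every standard leg
  -- has a solution of one of the types (s,0), (s,1), (s,2), (s,3)
  (∀ x y : V, IsStandardLeg T v x → IsStandardLeg T v y → x ≠ y →
    SolS0 T v x S → SolS0 T v y S → False) ∧
  (∀ x : V, IsStandardLeg T v x →
    SolS0 T v x S ∨ SolS1 T v x S ∨ SolS2 T v x S ∨ SolS3 T v x S) ∧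
  -- (2) every modified leg has a solution of type (m,1), (m,2) or (m,3)
  (∀ x : V, IsModifiedLeg T v x →
    SolM1 T v x S ∨ SolM2 T v x S ∨ SolM3 T v x S) ∧
  -- (3) if some standard leg has a type (s,0) solution, no modified leg has type (m,1)
  ((∃ x : V, IsStandardLeg T v x ∧ SolS0 T v x S) →
    ∀ y : V, IsModifiedLeg T v y → ¬ SolM1 T v y S) ∧
  -- (4) if some long leg has a type (s,0) solution, every other long leg has type (s,2)
  (∀ x : V, IsLongLeg T v x → SolS0 T v x S →
    ∀ y : V, IsLongLeg T v y → y ≠ x → SolS2 T v y S) ∧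
  -- (5) if some short leg has a type (s,0) solution, every long leg has type (s,2) or (s,3)
  ((∃ x : V, IsShortLeg T v x ∧ SolS0 T v x S) →
    ∀ y : V, IsLongLeg T v y → SolS2 T v y S ∨ SolS3 T v y S)

/-- A local set is thrifty if its solutions of types (s,2), (m,2) and (m,3)
consist of exactly two vertices each. -/
def IsThrifty (T : SimpleGraph V) [DecidableRel T.Adj] (v : V) (S : Set V) : Prop :=
  (∀ x : V, IsStandardLeg T v x → SolS2 T v x S → (S ∩ Branch T v x).ncard = 2) ∧
  (∀ x : V, IsModifiedLeg T v x → (SolM2 T v x S ∨ SolM3 T v x S) →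
    (S ∩ Branch T v x).ncard = 2)

section Aux
set_option linter.unusedSectionVars false

variable {T : SimpleGraph V}

private lemma aux_step (hc : T.Connected) {a b : V} {n : ℕ} (h : T.dist a b = n + 1) :
    ∃ c, T.Adj a c ∧ T.dist c b = n := by
  obtain ⟨p, hp⟩ := hc.exists_walk_length_eq_dist a b
  rw [h] at hp
  cases p with
  | nil => simp at hp
  | @cons _ c _ hadj q =>
    refine ⟨c, hadj, le_antisymm ?_ ?_⟩
    · have : T.dist c b ≤ q.length := SimpleGraph.dist_le q
      simp only [Walk.length_cons] at hp
      omega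
    · have h1 : T.dist a b ≤ T.dist a c + T.dist c b := hc.dist_triangle
      have h2 : T.dist a c = 1 := SimpleGraph.dist_eq_one_iff_adj.mpr hadj
      omega

private lemma aux_pred_unique (hT : T.IsTree) {a b c₁ c₂ : V} {n : ℕ}
    (h : T.dist a b = n + 1)
    (h₁ : T.Adj c₁ b) (h₂ : T.Adj c₂ b)
    (d₁ : T.dist a c₁ = n) (d₂ : T.dist a c₂ = n) : c₁ = c₂ := by
  obtain ⟨p₁, hp₁⟩ := hT.isConnected.exists_walk_length_eq_dist a c₁
  obtain ⟨p₂, hp₂⟩ := hT.isConnected.exists_walk_length_eq_dist a c₂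
  have w₁ : (p₁.concat h₁).IsPath := Walk.isPath_of_length_eq_dist _ (by
    rw [Walk.length_concat, hp₁, d₁, h])
  have w₂ : (p₂.concat h₂).IsPath := Walk.isPath_of_length_eq_dist _ (by
    rw [Walk.length_concat, hp₂, d₂, h])
  have heq : p₁.concat h₁ = p₂.concat h₂ := by
    have := hT.IsAcyclic.path_unique ⟨p₁.concat h₁, w₁⟩ ⟨p₂.concat h₂, w₂⟩
    exact congrArg Subtype.val this
  have hrev : Walk.cons h₁.symm p₁.reverse = Walk.cons h₂.symm p₂.reverse := by
    rw [← Walk.reverse_concat p₁ h₁, ← Walk.reverse_concat p₂ h₂, heq]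
  have hs := congrArg Walk.support hrev
  rw [Walk.support_cons, Walk.support_cons, p₁.reverse.support_eq_cons,
    p₂.reverse.support_eq_cons] at hs
  simp only [List.cons.injEq] at hs
  exact hs.2.1

private lemma aux_adj_dist_ne (hT : T.IsTree) {v x : V} (hvx : T.Adj v x) (u : V) :
    T.dist v u ≠ T.dist x u := by
  intro hEq
  obtain ⟨p, hpp, hpl⟩ := hT.isConnected.exists_path_of_dist v u
  have hxp : x ∉ p.support := by
    intro hx
    have t1 : T.dist x u ≤ (p.dropUntil x hx).length := SimpleGraph.dist_le _
    have t2 : T.dist v x ≤ (p.takeUntil x hx).length := SimpleGraph.dist_le _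
    have t3 : (p.takeUntil x hx).length + (p.dropUntil x hx).length = p.length := by
      have := congrArg Walk.length (p.take_spec hx)
      rwa [Walk.length_append] at this
    have t4 : T.dist v x = 1 := SimpleGraph.dist_eq_one_iff_adj.mpr hvx
    omega
  obtain ⟨q, hqp, hql⟩ := hT.isConnected.exists_path_of_dist x u
  have hcons : (Walk.cons hvx.symm p).IsPath := hpp.cons hxp
  have := hT.IsAcyclic.path_unique ⟨Walk.cons hvx.symm p, hcons⟩ ⟨q, hqp⟩
  have hlen := congrArg Walk.length (congrArg Subtype.val this)
  simp only [Walk.length_cons] at hlen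
  omega

private lemma aux_adj_cases (hT : T.IsTree) {v x : V} (hvx : T.Adj v x) (u : V) :
    T.dist v u = T.dist x u + 1 ∨ T.dist x u = T.dist v u + 1 := by
  have h1 : T.dist v u ≤ T.dist v x + T.dist x u := hT.isConnected.dist_triangle
  have h2 : T.dist x u ≤ T.dist x v + T.dist v u := hT.isConnected.dist_triangle
  have h3 : T.dist v x = 1 := SimpleGraph.dist_eq_one_iff_adj.mpr hvx
  have h4 : T.dist x v = 1 := SimpleGraph.dist_eq_one_iff_adj.mpr hvx.symm
  have h5 := aux_adj_dist_ne hT hvx u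
  omega

private lemma aux_mem_branch_self {v x : V} (hvx : T.Adj v x) : x ∈ Branch T v x := by
  show T.dist v x = T.dist x x + 1
  rw [SimpleGraph.dist_self, SimpleGraph.dist_eq_one_iff_adj.mpr hvx]

private lemma aux_not_mem_branch_self {v x : V} : v ∉ Branch T v x := by
  intro h
  have : T.dist v v = T.dist x v + 1 := h
  rw [SimpleGraph.dist_self] at this
  omega

private lemma aux_branch_dist_pos {v x w : V} (hw : w ∈ Branch T v x) : 1 ≤ T.dist v w := by
  have : T.dist v w = T.dist x w + 1 := hw
  omega

private lemma aux_branch_level1 (hT : T.IsTree) {v x w : V} (hw : w ∈ Branch T v x)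
    (h1 : T.dist v w = 1) : w = x := by
  have h : T.dist v w = T.dist x w + 1 := hw
  have : T.dist x w = 0 := by omega
  exact (hT.isConnected.dist_eq_zero_iff.mp this).symm

private lemma aux_parent (hT : T.IsTree) {v x w : V} (hvx : T.Adj v x)
    (hw : w ∈ Branch T v x) {n : ℕ} (hn : T.dist v w = n + 2) :
    ∃ p, p ∈ Branch T v x ∧ T.Adj p w ∧ T.dist v p = n + 1 ∧ T.dist x p = n := by
  have hb : T.dist v w = T.dist x w + 1 := hw
  have hx : T.dist w x = n + 1 := by rw [SimpleGraph.dist_comm]; omega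
  obtain ⟨p, hpw, hpx⟩ := aux_step hT.isConnected hx
  have hxp : T.dist x p = n := by rwa [SimpleGraph.dist_comm]
  have hdw : T.dist v w ≤ T.dist v p + 1 := by
    have h1 : T.dist v w ≤ T.dist v p + T.dist p w := hT.isConnected.dist_triangle
    have h2 : T.dist p w = 1 := SimpleGraph.dist_eq_one_iff_adj.mpr hpw.symm
    omega
  have hvp : T.dist v p = n + 1 := by
    rcases aux_adj_cases hT hvx p with h | h <;> omega
  exact ⟨p, by show T.dist v p = T.dist x p + 1; omega, hpw.symm, hvp, hxp⟩

private lemma aux_cut (hT : T.IsTree) {v x : V} (hvx : T.Adj v x) :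
    ∀ {w u : V}, w ∈ Branch T v x → u ∉ Branch T v x →
      T.dist u w = T.dist u v + T.dist v w := by
  suffices H : ∀ (m : ℕ) (w u : V), T.dist x w = m → w ∈ Branch T v x →
      u ∉ Branch T v x → T.dist u w = T.dist u v + T.dist v w by
    intro w u hw hu; exact H (T.dist x w) w u rfl hw hu
  intro m
  induction m with
  | zero =>
    intro w u hm hw hu
    have hwx : w = x := (hT.isConnected.dist_eq_zero_iff.mp hm).symm
    have hb : T.dist v w = T.dist x w + 1 := hw
    rcases aux_adj_cases hT hvx u with h | h
    · exact absurd h hu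
    · have h1 : T.dist u w = T.dist u x := by rw [hwx]
      have h2 : T.dist u x = T.dist x u := SimpleGraph.dist_comm
      have h3 : T.dist u v = T.dist v u := SimpleGraph.dist_comm
      omega
  | succ m ih =>
    intro w u hm hw hu
    have hb : T.dist v w = T.dist x w + 1 := hw
    have hvw : T.dist v w = m + 2 := by omega
    obtain ⟨p, hpB, hpw, hvp, hxp⟩ := aux_parent hT hvx hw hvw
    have hup : T.dist u p = T.dist u v + (m + 1) := by
      have := ih p u hxp hpB hu
      omega
    have hne : T.dist u w ≠ T.dist u p := by
      have h0 := aux_adj_dist_ne hT hpw u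
      have e1 : T.dist p u = T.dist u p := SimpleGraph.dist_comm
      have e2 : T.dist w u = T.dist u w := SimpleGraph.dist_comm
      omega
    have ht1 : T.dist u w ≤ T.dist u p + 1 := by
      have h1 : T.dist u w ≤ T.dist u p + T.dist p w := hT.isConnected.dist_triangle
      have h2 : T.dist p w = 1 := SimpleGraph.dist_eq_one_iff_adj.mpr hpw
      omega
    have ht2 : T.dist u p ≤ T.dist u w + 1 := by
      have h1 : T.dist u p ≤ T.dist u w + T.dist w p := hT.isConnected.dist_triangle
      have h2 : T.dist w p = 1 := SimpleGraph.dist_eq_one_iff_adj.mpr hpw.symm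
      omega
    have hbad : T.dist u w ≠ T.dist u v + m := by
      intro hbad
      have hpv : T.dist p v = m + 1 := by rwa [SimpleGraph.dist_comm]
      obtain ⟨z, hpz, hzv⟩ := aux_step hT.isConnected hpv
      have huz : T.dist u z = T.dist u v + m := by
        have h1 : T.dist u z ≤ T.dist u v + T.dist v z := hT.isConnected.dist_triangle
        have h2 : T.dist v z = m := by rwa [SimpleGraph.dist_comm]
        have h3 : T.dist u p ≤ T.dist u z + T.dist z p := hT.isConnected.dist_triangle
        have h4 : T.dist z p = 1 := SimpleGraph.dist_eq_one_iff_adj.mpr hpz.symm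
        omega
      have hwz : w = z := aux_pred_unique hT (n := T.dist u v + m)
        (by omega : T.dist u p = (T.dist u v + m) + 1) hpw.symm hpz.symm (by omega) huz
      have : T.dist v w = m := by rw [hwz, SimpleGraph.dist_comm]; exact hzv
      omega
    omega

private lemma aux_branch_disj (hT : T.IsTree) {v x y : V} (hvx : T.Adj v x) (hvy : T.Adj v y)
    (hxy : x ≠ y) : ∀ {w : V}, w ∈ Branch T v x → w ∈ Branch T v y → False := by
  suffices H : ∀ (m : ℕ) (w : V), T.dist x w = m → w ∈ Branch T v x → w ∈ Branch T v y →
      False by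
    intro w h1 h2; exact H (T.dist x w) w rfl h1 h2
  intro m
  induction m with
  | zero =>
    intro w hm h1 h2
    have hb1 : T.dist v w = T.dist x w + 1 := h1
    have hb2 : T.dist v w = T.dist y w + 1 := h2
    have hwx : w = x := (hT.isConnected.dist_eq_zero_iff.mp hm).symm
    have hwy : w = y := (hT.isConnected.dist_eq_zero_iff.mp (by omega : T.dist y w = 0)).symm
    exact hxy (hwx ▸ hwy ▸ rfl)
  | succ m ih =>
    intro w hm h1 h2
    have hb1 : T.dist v w = T.dist x w + 1 := h1
    have hvw : T.dist v w = m + 2 := by omega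
    obtain ⟨p₁, hp₁B, hp₁w, hvp₁, hxp₁⟩ := aux_parent hT hvx h1 hvw
    obtain ⟨p₂, hp₂B, hp₂w, hvp₂, hyp₂⟩ := aux_parent hT hvy h2 hvw
    have : p₁ = p₂ := aux_pred_unique hT (n := m + 1) hvw hp₁w hp₂w hvp₁ hvp₂
    exact ih p₁ hxp₁ hp₁B (this ▸ hp₂B)

private lemma aux_descend2 (hT : T.IsTree) {v x : V} (hvx : T.Adj v x) :
    ∀ (n : ℕ) (w : V), w ∈ Branch T v x → T.dist v w = n → 2 ≤ n →
      ∃ w₂ ∈ Branch T v x, T.dist v w₂ = 2 := by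
  intro n
  induction n using Nat.strong_induction_on with
  | _ n ih =>
    intro w hw hwn h2
    rcases Nat.lt_or_ge n 3 with h | h
    · exact ⟨w, hw, by omega⟩
    · obtain ⟨m, rfl⟩ : ∃ m, n = m + 2 := ⟨n - 2, by omega⟩
      obtain ⟨p, hpB, _, hvp, _⟩ := aux_parent hT hvx hw hwn
      exact ih (m + 1) (by omega) p hpB hvp (by omega)

private lemma aux_level_unique [DecidableRel T.Adj] (hT : T.IsTree) {v x : V}
    (hleg : IsStandardLeg T v x) :
    ∀ (n : ℕ) (w₁ w₂ : V), w₁ ∈ Branch T v x → w₂ ∈ Branch T v x →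
      T.dist v w₁ = n → T.dist v w₂ = n → w₁ = w₂ := by
  intro n
  induction n with
  | zero =>
    intro w₁ w₂ h1 h2 e1 e2
    exact absurd e1 (by have := aux_branch_dist_pos h1; omega)
  | succ n ih =>
    intro w₁ w₂ h1 h2 e1 e2
    cases n with
    | zero => rw [aux_branch_level1 hT h1 e1, aux_branch_level1 hT h2 e2]
    | succ m =>
      obtain ⟨p₁, hp₁B, hp₁w, hvp₁, _⟩ := aux_parent hT hleg.1 h1 e1
      obtain ⟨p₂, hp₂B, hp₂w, hvp₂, _⟩ := aux_parent hT hleg.1 h2 e2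
      have hpp : p₁ = p₂ := ih p₁ p₂ hp₁B hp₂B hvp₁ hvp₂
      by_contra hne
      have hpv : T.dist p₁ v = m + 1 := by rw [SimpleGraph.dist_comm]; exact hvp₁
      obtain ⟨q, hpq, hqv⟩ := aux_step hT.isConnected hpv
      have hvq : T.dist v q = m := by rwa [SimpleGraph.dist_comm]
      have hq1 : w₁ ≠ q := by intro h; rw [h] at e1; omega
      have hq2 : w₂ ≠ q := by intro h; rw [h] at e2; omega
      have hsub : ({w₁, w₂, q} : Finset V) ⊆ T.neighborFinset p₁ := by
        intro t ht
        simp only [Finset.mem_insert, Finset.mem_singleton] at ht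
        rw [SimpleGraph.mem_neighborFinset]
        rcases ht with rfl | rfl | rfl
        · exact hp₁w
        · exact hpp ▸ hp₂w
        · exact hpq
      have hcard : ({w₁, w₂, q} : Finset V).card = 3 :=
        Finset.card_eq_three.mpr ⟨w₁, w₂, q, hne, hq1, hq2, rfl⟩
      have hdeg3 : 3 ≤ T.degree p₁ := by
        rw [← hcard]
        exact Finset.card_le_card hsub
      have := hleg.2 p₁ hp₁B
      omega

private lemma aux_must_sep {L : Set V} {σ₁ σ₂ : V}
    (hLeq : L = {σ₁, σ₂}) (hL : IsLandmarkSet T L) {u w : V}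
    (hne : u ≠ w) (hu : u ∉ L) (hw : w ∉ L) :
    Separates T σ₁ u w ∧ Separates T σ₂ u w := by
  obtain ⟨τ₁, hτ₁, τ₂, hτ₂, hττ, hs1, hs2⟩ := hL u w hne hu hw
  subst hLeq
  simp only [Set.mem_insert_iff, Set.mem_singleton_iff] at hτ₁ hτ₂
  rcases hτ₁ with rfl | rfl <;> rcases hτ₂ with rfl | rfl
  · exact absurd rfl hττ
  · exact ⟨hs1, hs2⟩
  · exact ⟨hs2, hs1⟩
  · exact absurd rfl hττ

private lemma forward_sigma_eq (hT : T.IsTree) {v t₁ t₂ t₃ : V}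
    (h12 : t₁ ≠ t₂) (h13 : t₁ ≠ t₃) (h23 : t₂ ≠ t₃)
    (ha1 : T.Adj v t₁) (ha2 : T.Adj v t₂) (ha3 : T.Adj v t₃)
    {L : Set V} {σ₁ σ₂ : V} (hLeq : L = {σ₁, σ₂})
    (hσ₁ : σ₁ ∈ Branch T v t₁) (hσ₂ : σ₂ ∈ Branch T v t₂)
    (hL : IsLandmarkSet T L) : σ₁ = t₁ := by
  by_contra hne
  have ht₁L : t₁ ∉ L := by
    rw [hLeq]
    simp only [Set.mem_insert_iff, Set.mem_singleton_iff]
    rintro (h | h)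
    · exact hne h.symm
    · rw [← h] at hσ₂
      exact aux_branch_disj hT ha1 ha2 h12 (aux_mem_branch_self ha1) hσ₂
  have ht₃L : t₃ ∉ L := by
    rw [hLeq]
    simp only [Set.mem_insert_iff, Set.mem_singleton_iff]
    rintro (h | h)
    · rw [← h] at hσ₁
      exact aux_branch_disj hT ha3 ha1 (Ne.symm h13) (aux_mem_branch_self ha3) hσ₁
    · rw [← h] at hσ₂
      exact aux_branch_disj hT ha3 ha2 (Ne.symm h23) (aux_mem_branch_self ha3) hσ₂
  obtain ⟨_, hsep2⟩ := aux_must_sep hLeq hL (show t₃ ≠ t₁ from Ne.symm h13) ht₃L ht₁L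
  have hd3 : T.dist σ₂ t₃ = T.dist σ₂ v + 1 := by
    have := aux_cut hT ha3 (aux_mem_branch_self ha3)
      (fun hmem => aux_branch_disj hT ha2 ha3 h23 hσ₂ hmem)
    rwa [SimpleGraph.dist_eq_one_iff_adj.mpr ha3] at this
  have hd1 : T.dist σ₂ t₁ = T.dist σ₂ v + 1 := by
    have := aux_cut hT ha1 (aux_mem_branch_self ha1)
      (fun hmem => aux_branch_disj hT ha2 ha1 (Ne.symm h12) hσ₂ hmem)
    rwa [SimpleGraph.dist_eq_one_iff_adj.mpr ha1] at this
  exact hsep2 (by rw [hd3, hd1])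

private lemma forward_short (hT : T.IsTree) {v t₁ t₂ : V}
    (h12 : t₁ ≠ t₂) (ha1 : T.Adj v t₁) (ha2 : T.Adj v t₂)
    {L : Set V} {σ₂ : V} (hLeq : L = {t₁, σ₂}) (hσ₂ : σ₂ ∈ Branch T v t₂)
    (hL : IsLandmarkSet T L) : Branch T v t₁ = {t₁} := by
  rw [Set.eq_singleton_iff_unique_mem]
  refine ⟨aux_mem_branch_self ha1, ?_⟩
  intro w hw
  by_contra hne
  have h1 : 1 ≤ T.dist v w := aux_branch_dist_pos hw
  have h2 : 2 ≤ T.dist v w := by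
    rcases Nat.lt_or_ge (T.dist v w) 2 with h | h
    · exact absurd (aux_branch_level1 hT hw (by omega)) hne
    · exact h
  obtain ⟨w₂, hw₂B, hw₂d⟩ := aux_descend2 hT ha1 (T.dist v w) w hw rfl h2
  have hw₂L : w₂ ∉ L := by
    rw [hLeq]
    simp only [Set.mem_insert_iff, Set.mem_singleton_iff]
    rintro (h | h)
    · rw [h] at hw₂d
      have := SimpleGraph.dist_eq_one_iff_adj.mpr ha1
      omega
    · rw [h] at hw₂B
      exact aux_branch_disj hT ha1 ha2 h12 hw₂B hσ₂
  have hvL : v ∉ L := by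
    rw [hLeq]
    simp only [Set.mem_insert_iff, Set.mem_singleton_iff]
    rintro (h | h)
    · exact ha1.ne h
    · rw [← h] at hσ₂
      exact aux_not_mem_branch_self hσ₂
  have hwv : w₂ ≠ v := by
    intro h
    rw [h, SimpleGraph.dist_self] at hw₂d
    omega
  obtain ⟨hsep1, _⟩ := aux_must_sep hLeq hL hwv hw₂L hvL
  have e1 : T.dist t₁ w₂ = 1 := by
    have hb : T.dist v w₂ = T.dist t₁ w₂ + 1 := hw₂B
    omega
  have e2 : T.dist t₁ v = 1 := SimpleGraph.dist_eq_one_iff_adj.mpr ha1.symm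
  exact hsep1 (by rw [e1, e2])

private lemma forward_conclude [DecidableRel T.Adj] (hT : T.IsTree)
    {v t₁ t₂ t₃ : V}
    (h12 : t₁ ≠ t₂) (h13 : t₁ ≠ t₃) (h23 : t₂ ≠ t₃)
    (ha1 : T.Adj v t₁) (ha2 : T.Adj v t₂) (ha3 : T.Adj v t₃)
    (hleg1 : IsStandardLeg T v t₁) (hleg2 : IsStandardLeg T v t₂)
    {L S : Set V} (hSL : S ⊆ L) (hcard : L.ncard ≤ 2)
    (hS1 : (S ∩ Branch T v t₁).Nonempty) (hS2 : (S ∩ Branch T v t₂).Nonempty)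
    (hL : IsLandmarkSet T L) :
    ∃ x y : V, x ≠ y ∧ IsShortLeg T v x ∧ IsShortLeg T v y ∧ L = {x, y} := by
  obtain ⟨σ₁, hσ₁S, hσ₁B⟩ := hS1
  obtain ⟨σ₂, hσ₂S, hσ₂B⟩ := hS2
  have hσne : σ₁ ≠ σ₂ := by
    intro h
    rw [h] at hσ₁B
    exact aux_branch_disj hT ha1 ha2 h12 hσ₁B hσ₂B
  have hsub : ({σ₁, σ₂} : Set V) ⊆ L := by
    intro t ht
    simp only [Set.mem_insert_iff, Set.mem_singleton_iff] at ht
    rcases ht with rfl | rfl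
    · exact hSL hσ₁S
    · exact hSL hσ₂S
  have hc2 : ({σ₁, σ₂} : Set V).ncard = 2 := Set.ncard_pair hσne
  have hLeq : L = {σ₁, σ₂} :=
    (Set.eq_of_subset_of_ncard_le hsub (by omega) (Set.toFinite L)).symm
  have e1 : σ₁ = t₁ := forward_sigma_eq hT h12 h13 h23 ha1 ha2 ha3 hLeq hσ₁B hσ₂B hL
  have e2 : σ₂ = t₂ := forward_sigma_eq hT (Ne.symm h12) h23 h13 ha2 ha1 ha3
    (by rw [hLeq, Set.pair_comm]) hσ₂B hσ₁B hL
  rw [e1] at hLeq hσ₁B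
  rw [e2] at hLeq hσ₂B
  have short1 : Branch T v t₁ = {t₁} := forward_short hT h12 ha1 ha2 hLeq hσ₂B hL
  have short2 : Branch T v t₂ = {t₂} := forward_short hT (Ne.symm h12) ha2 ha1
    (by rw [hLeq, Set.pair_comm]) hσ₁B hL
  exact ⟨t₁, t₂, h12, ⟨hleg1, short1⟩, ⟨hleg2, short2⟩, hLeq⟩

end Aux

/-- a tree whose only core `v` is a small core with three standard legs;
if `L` contains a local set for `v` and `|L| ≤ 2`, then `L` is a landmark set iff `L`
consists of the two vertices of two short legs of `v`. -/
theorem single_small_core_two_landmarks_iff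
    (T : SimpleGraph V) [DecidableRel T.Adj] (hT : T.IsTree)
    (v : V) (hv : IsSmallCore T v) (huniq : ∀ w : V, IsCore T w → w = v)
    (hlegs : ∀ x : V, T.Adj v x → IsStandardLeg T v x)
    (L : Set V) (hloc : ∃ S : Set V, S ⊆ L ∧ IsLocalSet T v S)
    (hcard : L.ncard ≤ 2) :
    IsLandmarkSet T L ↔
      ∃ x y : V, x ≠ y ∧ IsShortLeg T v x ∧ IsShortLeg T v y ∧ L = {x, y} := by
  classical
  constructor
  · intro hL
    obtain ⟨S, hSL, hSloc⟩ := hloc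
    have hdeg : (T.neighborFinset v).card = 3 := hv.1
    obtain ⟨a, b, c, hab, hac, hbc, hN⟩ := Finset.card_eq_three.mp hdeg
    have hadj : ∀ t, t ∈ ({a, b, c} : Finset V) → T.Adj v t := by
      intro t ht
      rw [← hN] at ht
      rw [SimpleGraph.mem_neighborFinset] at ht
      exact ht
    have haa : T.Adj v a := hadj a (by simp)
    have hba : T.Adj v b := hadj b (by simp)
    have hca : T.Adj v c := hadj c (by simp)
    have hne_pair : ∀ t t', T.Adj v t → T.Adj v t' → t ≠ t' →
        S ∩ Branch T v t = ∅ → S ∩ Branch T v t' = ∅ → False := by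
      intro t t' h h' hne e e'
      exact hSloc.2.1 t t' (hlegs t h) (hlegs t' h') hne e e'
    have hnotall : ¬ ((S ∩ Branch T v a).Nonempty ∧ (S ∩ Branch T v b).Nonempty ∧
        (S ∩ Branch T v c).Nonempty) := by
      rintro ⟨⟨sa, hsa⟩, ⟨sb, hsb⟩, ⟨sc, hsc⟩⟩
      have d1 : sa ≠ sb := by
        intro h
        rw [h] at hsa
        exact aux_branch_disj hT haa hba hab hsa.2 hsb.2
      have d2 : sa ≠ sc := by
        intro h
        rw [h] at hsa
        exact aux_branch_disj hT haa hca hac hsa.2 hsc.2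
      have d3 : sb ≠ sc := by
        intro h
        rw [h] at hsb
        exact aux_branch_disj hT hba hca hbc hsb.2 hsc.2
      have hsub3 : ({sa, sb, sc} : Set V) ⊆ L := by
        intro t ht
        simp only [Set.mem_insert_iff, Set.mem_singleton_iff] at ht
        rcases ht with rfl | rfl | rfl
        · exact hSL hsa.1
        · exact hSL hsb.1
        · exact hSL hsc.1
      have hc3 : ({sa, sb, sc} : Set V).ncard = 3 := by
        rw [Set.ncard_insert_of_notMem (by simp [d1, d2]),
          Set.ncard_insert_of_notMem (by simp [d3]), Set.ncard_singleton]
      have hle := Set.ncard_le_ncard hsub3 (Set.toFinite L)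
      omega
    by_cases hEa : S ∩ Branch T v a = ∅
    · have hb' : (S ∩ Branch T v b).Nonempty := Set.nonempty_iff_ne_empty.mpr
        (fun h => hne_pair a b haa hba hab hEa h)
      have hc' : (S ∩ Branch T v c).Nonempty := Set.nonempty_iff_ne_empty.mpr
        (fun h => hne_pair a c haa hca hac hEa h)
      exact forward_conclude hT hbc (Ne.symm hab) (Ne.symm hac) hba hca haa
        (hlegs b hba) (hlegs c hca) hSL hcard hb' hc' hL
    · by_cases hEb : S ∩ Branch T v b = ∅
      · have ha' : (S ∩ Branch T v a).Nonempty := Set.nonempty_iff_ne_empty.mpr hEa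
        have hc' : (S ∩ Branch T v c).Nonempty := Set.nonempty_iff_ne_empty.mpr
          (fun h => hne_pair b c hba hca hbc hEb h)
        exact forward_conclude hT hac hab (Ne.symm hbc) haa hca hba
          (hlegs a haa) (hlegs c hca) hSL hcard ha' hc' hL
      · by_cases hEc : S ∩ Branch T v c = ∅
        · have ha' : (S ∩ Branch T v a).Nonempty := Set.nonempty_iff_ne_empty.mpr hEa
          have hb' : (S ∩ Branch T v b).Nonempty := Set.nonempty_iff_ne_empty.mpr hEb
          exact forward_conclude hT hab hac hbc haa hba hca
            (hlegs a haa) (hlegs b hba) hSL hcard ha' hb' hL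
        · exact absurd ⟨Set.nonempty_iff_ne_empty.mpr hEa,
            Set.nonempty_iff_ne_empty.mpr hEb, Set.nonempty_iff_ne_empty.mpr hEc⟩ hnotall
  · rintro ⟨x, y, hxy, hsx, hsy, rfl⟩
    have hax : T.Adj v x := hsx.1.1
    have hay : T.Adj v y := hsy.1.1
    have hplace : ∀ u, u ∉ ({x, y} : Set V) → u ≠ v →
        ∃ t, T.Adj v t ∧ t ≠ x ∧ t ≠ y ∧ u ∈ Branch T v t := by
      intro u hu huv
      have hd : 1 ≤ T.dist v u := hT.isConnected.pos_dist_of_ne (Ne.symm huv)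
      obtain ⟨m, hm⟩ : ∃ m, T.dist v u = m + 1 := ⟨T.dist v u - 1, by omega⟩
      obtain ⟨t, hvt, htu⟩ := aux_step hT.isConnected hm
      have hmem : u ∈ Branch T v t := by
        show T.dist v u = T.dist t u + 1
        omega
      have htx : t ≠ x := by
        intro h
        rw [h, hsx.2] at hmem
        rw [Set.mem_singleton_iff] at hmem
        exact hu (by simp [hmem])
      have hty : t ≠ y := by
        intro h
        rw [h, hsy.2] at hmem
        rw [Set.mem_singleton_iff] at hmem
        exact hu (by simp [hmem])
      exact ⟨t, hvt, htx, hty, hmem⟩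
    have hform : ∀ u, u ∉ ({x, y} : Set V) →
        T.dist x u = T.dist v u + 1 ∧ T.dist y u = T.dist v u + 1 := by
      intro u hu
      by_cases huv : u = v
      · subst huv
        rw [SimpleGraph.dist_self]
        constructor
        · simpa using SimpleGraph.dist_eq_one_iff_adj.mpr hax.symm
        · simpa using SimpleGraph.dist_eq_one_iff_adj.mpr hay.symm
      · obtain ⟨t, hvt, htx, hty, hmem⟩ := hplace u hu huv
        have hxB : x ∉ Branch T v t := fun h =>
          aux_branch_disj hT hvt hax htx h (aux_mem_branch_self hax)
        have hyB : y ∉ Branch T v t := fun h =>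
          aux_branch_disj hT hvt hay hty h (aux_mem_branch_self hay)
        have c1 := aux_cut hT hvt hmem hxB
        have c2 := aux_cut hT hvt hmem hyB
        have e1 : T.dist x v = 1 := SimpleGraph.dist_eq_one_iff_adj.mpr hax.symm
        have e2 : T.dist y v = 1 := SimpleGraph.dist_eq_one_iff_adj.mpr hay.symm
        omega
    have hinj : ∀ u w, u ∉ ({x, y} : Set V) → w ∉ ({x, y} : Set V) →
        T.dist v u = T.dist v w → u = w := by
      intro u w hu hw he
      by_cases huv : u = v
      · subst huv
        rw [SimpleGraph.dist_self] at he
        exact hT.isConnected.dist_eq_zero_iff.mp he.symm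
      · by_cases hwv : w = v
        · subst hwv
          rw [SimpleGraph.dist_self] at he
          exact absurd (hT.isConnected.dist_eq_zero_iff.mp he).symm huv
        · obtain ⟨t, hvt, htx, hty, hmem⟩ := hplace u hu huv
          obtain ⟨t', hvt', htx', hty', hmem'⟩ := hplace w hw hwv
          have hsubxy : ({x, y} : Finset V) ⊆ T.neighborFinset v := by
            intro s hs
            simp only [Finset.mem_insert, Finset.mem_singleton] at hs
            rcases hs with rfl | rfl
            · rw [SimpleGraph.mem_neighborFinset]; exact hax
            · rw [SimpleGraph.mem_neighborFinset]; exact hay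
          have hcard1 : (T.neighborFinset v \ ({x, y} : Finset V)).card = 1 := by
            rw [Finset.card_sdiff_of_subset hsubxy, Finset.card_pair hxy]
            have h3 : (T.neighborFinset v).card = 3 := hv.1
            omega
          have hm1 : t ∈ T.neighborFinset v \ ({x, y} : Finset V) := by
            simp [SimpleGraph.mem_neighborFinset, hvt, htx, hty]
          have hm2 : t' ∈ T.neighborFinset v \ ({x, y} : Finset V) := by
            simp [SimpleGraph.mem_neighborFinset, hvt', htx', hty']
          have htt : t = t' := Finset.card_le_one.mp hcard1.le t hm1 t' hm2
          rw [← htt] at hmem'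
          exact aux_level_unique hT (hlegs t hvt) (T.dist v u) u w hmem hmem' rfl he.symm
    intro u w hneq hu hw
    obtain ⟨ex1, ey1⟩ := hform u hu
    obtain ⟨ex2, ey2⟩ := hform w hw
    have hdne : T.dist v u ≠ T.dist v w := fun h => hneq (hinj u w hu hw h)
    exact ⟨x, by simp, y, by simp, hxy,
      show T.dist x u ≠ T.dist x w by omega,
      show T.dist y u ≠ T.dist y w by omega⟩
end

section
/- Let T be a tree with no regular cores and exactly two cores u and v, both small. Every landmark set of T that is minimal with respect to set inclusion contains at most one vertex on the path between u and v (excluding u and v themselves), and at most two vertices on each long leg of u and of v. -/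
open SimpleGraph

variable {V : Type*} [Fintype V] [DecidableEq V]

set_option linter.unusedSectionVars false
set_option maxHeartbeats 1000000

namespace TreeFound

variable {T : SimpleGraph V}

lemma dcomm (T : SimpleGraph V) (x y : V) : T.dist x y = T.dist y x :=
  SimpleGraph.dist_comm

lemma exists_geodesic (hc : T.Connected) (x y : V) :
    ∃ p : T.Walk x y, p.IsPath ∧ p.length = T.dist x y := by
  obtain ⟨p, hp⟩ := hc.exists_walk_length_eq_dist x y
  refine ⟨p.bypass, p.bypass_isPath, le_antisymm ?_ (SimpleGraph.dist_le _)⟩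
  calc p.bypass.length ≤ p.length := Walk.length_bypass_le p
    _ = T.dist x y := hp

lemma mem_support_split {x y z : V} (p : T.Walk x y) (hz : z ∈ p.support) :
    T.dist x z + T.dist z y ≤ p.length := by
  have h := p.take_spec hz
  have : (p.takeUntil z hz).length + (p.dropUntil z hz).length = p.length := by
    rw [← Walk.length_append, h]
  calc T.dist x z + T.dist z y ≤ (p.takeUntil z hz).length + (p.dropUntil z hz).length :=
    Nat.add_le_add (SimpleGraph.dist_le _) (SimpleGraph.dist_le _)
    _ = p.length := this

lemma par (hT : T.IsTree) {a b : V} (hab : T.Adj a b) (w : V) :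
    T.dist w a ≠ T.dist w b := by
  intro h
  obtain ⟨p, hp, hlen⟩ := exists_geodesic hT.isConnected a w
  by_cases hb : b ∈ p.support
  · have h1 := mem_support_split p hb
    rw [hlen] at h1
    have h2 : T.dist a b = 1 := SimpleGraph.dist_eq_one_iff_adj.mpr hab
    have e1 : T.dist w a = T.dist a w := dcomm T w a
    have e2 : T.dist w b = T.dist b w := dcomm T w b
    omega
  · set q : T.Walk b w := Walk.cons hab.symm p with hq
    have hqp : q.IsPath := hp.cons hb
    obtain ⟨r, hr, hrlen⟩ := exists_geodesic hT.isConnected b w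
    have := (hT.existsUnique_path b w).unique hqp hr
    have hlq : q.length = r.length := by rw [this]
    rw [hq, Walk.length_cons, hlen, hrlen] at hlq
    have e1 : T.dist w a = T.dist a w := dcomm T w a
    have e2 : T.dist w b = T.dist b w := dcomm T w b
    omega

/-- for an edge (a,b), every vertex is strictly closer to one end. -/
lemma step (hT : T.IsTree) {a b : V} (hab : T.Adj a b) (w : V) :
    T.dist w a = T.dist w b + 1 ∨ T.dist w b = T.dist w a + 1 := by
  have h1 : T.dist w a ≤ T.dist w b + 1 := by
    have := hT.isConnected.dist_triangle (u := w) (v := b) (w := a)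
    have h2 : T.dist b a = 1 := SimpleGraph.dist_eq_one_iff_adj.mpr hab.symm
    omega
  have h2 : T.dist w b ≤ T.dist w a + 1 := by
    have := hT.isConnected.dist_triangle (u := w) (v := a) (w := b)
    have h3 : T.dist a b = 1 := SimpleGraph.dist_eq_one_iff_adj.mpr hab
    omega
  have := par hT hab w
  omega

lemma dist_pos_of_ne (hT : T.IsTree) {x y : V} (h : x ≠ y) : 0 < T.dist x y :=
  hT.isConnected.pos_dist_of_ne h

lemma eq_of_dist_eq_zero (hT : T.IsTree) {x y : V} (h : T.dist x y = 0) : x = y :=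
  (hT.isConnected.dist_eq_zero_iff).mp h

/-- The only edge crossing the cut of the edge (u,x) is (u,x) itself:
if z is on the u-side and z' on the x-side and they are adjacent, then z = u. -/
lemma cross (hT : T.IsTree) {u x z z' : V} (hux : T.Adj u x) (hzz' : T.Adj z z')
    (hz' : T.dist u z' = T.dist x z' + 1) (hz : T.dist x z = T.dist u z + 1) :
    z = u := by
  by_contra hzu
  have ha0pos : 0 < T.dist u z := dist_pos_of_ne hT (Ne.symm hzu)
  set a0 := T.dist u z with ha0
  -- pin down distances to z'
  have hs1 := step hT hzz' u
  have hs2 := step hT hzz' x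
  have e1 : T.dist u z = T.dist z u := dcomm T u z
  have e2 : T.dist u z' = T.dist z' u := dcomm T u z'
  have e3 : T.dist x z = T.dist z x := dcomm T x z
  have e4 : T.dist x z' = T.dist z' x := dcomm T x z'
  have huz' : T.dist u z' = a0 + 1 := by omega
  have hxz' : T.dist x z' = a0 := by omega
  -- geodesic from z to u
  obtain ⟨p, hp, hplen⟩ := exists_geodesic hT.isConnected z u
  have hz'p : z' ∉ p.support := by
    intro hmem
    have := mem_support_split p hmem
    have h1 : T.dist z z' = 1 := SimpleGraph.dist_eq_one_iff_adj.mpr hzz'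
    rw [hplen] at this
    have e5 : T.dist z u = T.dist u z := dcomm T z u
    have e6 : T.dist z' u = T.dist u z' := dcomm T z' u
    omega
  set P1 : T.Walk z' u := Walk.cons hzz'.symm p with hP1
  have hP1path : P1.IsPath := hp.cons hz'p
  -- geodesic from x to z', reversed, plus the edge u-x
  obtain ⟨q, hq, hqlen⟩ := exists_geodesic hT.isConnected x z'
  have huq : u ∉ q.support := by
    intro hmem
    have := mem_support_split q hmem
    have h1 : T.dist x u = 1 := SimpleGraph.dist_eq_one_iff_adj.mpr hux.symm
    rw [hqlen] at this
    have e5 : T.dist x z' = T.dist z' x := dcomm T x z'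
    have e6 : T.dist u z' = T.dist z' u := dcomm T u z'
    omega
  set P2 : T.Walk z' u := (Walk.cons hux q).reverse with hP2
  have hP2path : P2.IsPath := (hq.cons huq).reverse
  have hPP : P1 = P2 := (hT.existsUnique_path z' u).unique hP1path hP2path
  have hx2 : x ∈ P2.support := by
    rw [hP2, Walk.support_reverse, List.mem_reverse, Walk.support_cons]
    exact List.mem_cons_of_mem _ q.start_mem_support
  rw [← hPP, hP1, Walk.support_cons] at hx2
  rcases List.mem_cons.mp hx2 with h | h
  · rw [h, SimpleGraph.dist_self] at hxz'
    omega
  · have := mem_support_split p h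
    have h1 : T.dist x u = 1 := SimpleGraph.dist_eq_one_iff_adj.mpr hux.symm
    rw [hplen] at this
    have e5 : T.dist z x = T.dist x z := dcomm T z x
    have e6 : T.dist z u = T.dist u z := dcomm T z u
    omega

/-- Gateway lemma: if w is on the x-side of the edge (u,x) and p on the u-side,
then the distance from p to w passes through u. -/
lemma gateway (hT : T.IsTree) {u x w p : V} (hux : T.Adj u x)
    (hw : T.dist u w = T.dist x w + 1) (hp : T.dist x p = T.dist u p + 1) :
    T.dist p w = T.dist p u + T.dist u w := by
  -- first: any walk from p to w contains u
  have key : ∀ (a b : V) (q : T.Walk a b), T.dist u b = T.dist x b + 1 →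
      T.dist x a = T.dist u a + 1 → u ∈ q.support := by
    intro a b q
    induction q with
    | nil =>
      intro h1 h2
      exfalso
      omega
    | @cons s t w' hadj q ih =>
      intro h1 h2
      by_cases ht : T.dist x t = T.dist u t + 1
      · exact List.mem_cons_of_mem _ (ih h1 ht)
      · have hst := step hT hux t
        have e1 : T.dist t u = T.dist u t := dcomm T t u
        have e2 : T.dist t x = T.dist x t := dcomm T t x
        have ht2 : T.dist u t = T.dist x t + 1 := by omega
        have hsu : s = u := cross hT hux hadj ht2 h2
        rw [Walk.support_cons, ← hsu]
        exact List.mem_cons_self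
  obtain ⟨q, hqpath, hqlen⟩ := exists_geodesic hT.isConnected p w
  have hu : u ∈ q.support := key p w q hw hp
  have h1 := mem_support_split q hu
  rw [hqlen] at h1
  have h2 := hT.isConnected.dist_triangle (u := p) (v := u) (w := w)
  omega

/-- first step of a geodesic -/
lemma first_step (hT : T.IsTree) {u w : V} (h : u ≠ w) :
    ∃ n, T.Adj u n ∧ T.dist u w = T.dist n w + 1 := by
  obtain ⟨p, hp, hplen⟩ := exists_geodesic hT.isConnected u w
  cases p with
  | nil => exact absurd rfl h
  | cons hadj q =>
    rename_i n
    refine ⟨n, hadj, ?_⟩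
    rw [Walk.length_cons] at hplen
    have h1 : T.dist n w ≤ q.length := SimpleGraph.dist_le q
    have h2 := hT.isConnected.dist_triangle (u := u) (v := n) (w := w)
    have h3 : T.dist u n = 1 := SimpleGraph.dist_eq_one_iff_adj.mpr hadj
    omega

lemma last_step (hT : T.IsTree) {u w : V} (h : u ≠ w) :
    ∃ n, T.Adj n w ∧ T.dist u w = T.dist u n + 1 := by
  obtain ⟨n, hadj, hn⟩ := first_step hT (Ne.symm h)
  exact ⟨n, hadj.symm, by rw [dcomm T u w, dcomm T u n]; exact hn⟩

end TreeFound



namespace TwoCore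

open TreeFound

variable {T : SimpleGraph V}

lemma branch_self {u x : V} (h : T.Adj u x) : x ∈ Branch T u x := by
  show T.dist u x = T.dist x x + 1
  rw [SimpleGraph.dist_self, SimpleGraph.dist_eq_one_iff_adj.mpr h]

lemma base_not_mem_branch {u x : V} : u ∉ Branch T u x := by
  intro h
  have : T.dist u u = T.dist x u + 1 := h
  rw [SimpleGraph.dist_self] at this
  omega

lemma mem_branch {u x w : V} (h : w ∈ Branch T u x) : T.dist u w = T.dist x w + 1 := h

lemma branch_or (hT : T.IsTree) {u x : V} (h : T.Adj u x) (w : V) :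
    w ∈ Branch T u x ∨ T.dist x w = T.dist u w + 1 := by
  have hs := step hT h w
  have e1 : T.dist w u = T.dist u w := dcomm T w u
  have e2 : T.dist w x = T.dist x w := dcomm T w x
  rcases hs with h1 | h1
  · left; show T.dist u w = T.dist x w + 1; omega
  · right; omega

lemma gw (hT : T.IsTree) {u x w p : V} (h : T.Adj u x) (hw : w ∈ Branch T u x)
    (hp : p ∉ Branch T u x) : T.dist p w = T.dist p u + T.dist u w := by
  rcases branch_or hT h p with h1 | h1
  · exact absurd h1 hp
  · exact gateway hT h hw h1

lemma branch_disjoint (hT : T.IsTree) {u x x' w : V} (hx : T.Adj u x) (hx' : T.Adj u x')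
    (hne : x ≠ x') (hw : w ∈ Branch T u x) (hw' : w ∈ Branch T u x') : False := by
  by_cases hmem : x' ∈ Branch T u x
  · have h1 : T.dist u x' = T.dist x x' + 1 := hmem
    have h2 : T.dist u x' = 1 := SimpleGraph.dist_eq_one_iff_adj.mpr hx'
    have h3 : T.dist x x' = 0 := by omega
    exact hne (eq_of_dist_eq_zero hT h3)
  · have h1 := gw hT hx hw hmem
    have h2 : T.dist u w = T.dist x' w + 1 := hw'
    have h3 : T.dist x' u = 1 := SimpleGraph.dist_eq_one_iff_adj.mpr hx'.symm
    omega

variable [DecidableRel T.Adj]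

structure Half (T : SimpleGraph V) [DecidableRel T.Adj] (u v : V) where
  su : V
  au : V
  cu : V
  adj_su : T.Adj u su
  short_su : Branch T u su = {su}
  leg_su : ∀ w ∈ Branch T u su, T.degree w ≤ 2
  adj_au : T.Adj u au
  leg_au : ∀ w ∈ Branch T u au, T.degree w ≤ 2
  adj_cu : T.Adj u cu
  v_mem : v ∈ Branch T u cu
  ne_su_au : su ≠ au
  deg_u : T.degree u = 3
  deg_v : T.degree v = 3

lemma mk_half (hT : T.IsTree) {u v : V} (huv : u ≠ v) (hu : IsSmallCore T u)
    (hv : IsSmallCore T v) : Nonempty (Half T u v) := by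
  obtain ⟨hdeg, x, y, hxy, ⟨⟨adjx, legx⟩, shortx⟩, ⟨adjy, legy⟩⟩ := hu
  obtain ⟨n, hn, hnd⟩ := first_step hT huv
  exact ⟨⟨x, y, n, adjx, shortx, legx, adjy, legy, hn, hnd, hxy, hdeg, hv.1⟩⟩

namespace Half

variable {u v : V} (H : Half T u v)

lemma cu_ne_su : H.cu ≠ H.su := by
  intro h
  have hv := H.v_mem
  rw [h, H.short_su] at hv
  have := H.leg_su v (by rw [H.short_su]; exact hv)
  rw [H.deg_v] at this
  omega

lemma cu_ne_au : H.cu ≠ H.au := by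
  intro h
  have hv := H.v_mem
  rw [h] at hv
  have := H.leg_au v hv
  rw [H.deg_v] at this
  omega

lemma neighbors {n : V} (h : T.Adj u n) : n = H.su ∨ n = H.au ∨ n = H.cu := by
  classical
  have hsub : ({H.su, H.au, H.cu} : Finset V) ⊆ T.neighborFinset u := by
    intro z hz
    simp only [Finset.mem_insert, Finset.mem_singleton] at hz
    rcases hz with rfl | rfl | rfl
    · exact (T.mem_neighborFinset u _).mpr H.adj_su
    · exact (T.mem_neighborFinset u _).mpr H.adj_au
    · exact (T.mem_neighborFinset u _).mpr H.adj_cu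
  have hcard : ({H.su, H.au, H.cu} : Finset V).card = 3 := by
    rw [Finset.card_insert_of_notMem, Finset.card_insert_of_notMem, Finset.card_singleton]
    · simp [H.cu_ne_au.symm]
    · simp [H.ne_su_au, (H.cu_ne_su).symm]
  have heq : ({H.su, H.au, H.cu} : Finset V) = T.neighborFinset u := by
    apply Finset.eq_of_subset_of_card_le hsub
    rw [T.card_neighborFinset_eq_degree, H.deg_u, hcard]
  have : n ∈ T.neighborFinset u := (T.mem_neighborFinset u n).mpr h
  rw [← heq] at this
  simpa using this

lemma coverage (hT : T.IsTree) (w : V) (hw : w ≠ u) :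
    w ∈ Branch T u H.su ∨ w ∈ Branch T u H.au ∨ w ∈ Branch T u H.cu := by
  obtain ⟨n, hn, hnd⟩ := first_step hT (Ne.symm hw)
  rcases H.neighbors hn with rfl | rfl | rfl
  · exact Or.inl hnd
  · exact Or.inr (Or.inl hnd)
  · exact Or.inr (Or.inr hnd)

end Half

end TwoCore


namespace TwoCore

open TreeFound

variable {T : SimpleGraph V}

/-- The vertices on the path between u and v (inclusive). -/
def OnPath (T : SimpleGraph V) (u v : V) : Set V :=
  {w | T.dist u w + T.dist w v = T.dist u v}

lemma u_mem_path {u v : V} : u ∈ OnPath T u v := by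
  show T.dist u u + T.dist u v = T.dist u v
  rw [SimpleGraph.dist_self]
  omega

lemma v_mem_path {u v : V} : v ∈ OnPath T u v := by
  show T.dist u v + T.dist v v = T.dist u v
  rw [SimpleGraph.dist_self]
  omega

lemma mem_path {u v w : V} (h : w ∈ OnPath T u v) :
    T.dist u w + T.dist w v = T.dist u v := h

lemma path_symm {u v w : V} (h : w ∈ OnPath T u v) : w ∈ OnPath T v u := by
  have h1 : T.dist u w + T.dist w v = T.dist u v := h
  show T.dist v w + T.dist w u = T.dist v u
  have e1 : T.dist u w = T.dist w u := dcomm T u w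
  have e2 : T.dist w v = T.dist v w := dcomm T w v
  have e3 : T.dist u v = T.dist v u := dcomm T u v
  omega

lemma three_nbrs [DecidableRel T.Adj] {z a b c : V} (ha : T.Adj z a) (hb : T.Adj z b)
    (hc : T.Adj z c) (hab : a ≠ b) (hac : a ≠ c) (hbc : b ≠ c) : 3 ≤ T.degree z := by
  have hsub : ({a, b, c} : Finset V) ⊆ T.neighborFinset z := by
    intro w hw
    simp only [Finset.mem_insert, Finset.mem_singleton] at hw
    rcases hw with rfl | rfl | rfl
    · exact (T.mem_neighborFinset z _).mpr ha
    · exact (T.mem_neighborFinset z _).mpr hb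
    · exact (T.mem_neighborFinset z _).mpr hc
  have hcard : ({a, b, c} : Finset V).card = 3 := by
    rw [Finset.card_insert_of_notMem, Finset.card_insert_of_notMem, Finset.card_singleton]
    · simpa using hbc
    · simp [hab, hac]
  rw [← T.card_neighborFinset_eq_degree, ← hcard]
  exact Finset.card_le_card hsub

lemma path_nbr_u (hT : T.IsTree) {u v w : V} (hw : w ∈ OnPath T u v) (hwu : w ≠ u) :
    ∃ w', T.Adj w' w ∧ w' ∈ OnPath T u v ∧ T.dist u w = T.dist u w' + 1 := by
  obtain ⟨w', hadj, hd⟩ := last_step hT (Ne.symm hwu)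
  refine ⟨w', hadj, ?_, hd⟩
  have h1 : T.dist u w + T.dist w v = T.dist u v := hw
  have h2 : T.dist u v ≤ T.dist u w' + T.dist w' v := hT.isConnected.dist_triangle
  have h3 : T.dist w' v ≤ T.dist w' w + T.dist w v := hT.isConnected.dist_triangle
  have h4 : T.dist w' w = 1 := SimpleGraph.dist_eq_one_iff_adj.mpr hadj
  show T.dist u w' + T.dist w' v = T.dist u v
  omega

lemma branch_dist_pos {u x w : V} (h : w ∈ Branch T u x) : 1 ≤ T.dist u w := by
  have := mem_branch h; omega

lemma v_not_mem_au [DecidableRel T.Adj] {u v : V} (H : Half T u v) :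
    v ∉ Branch T u H.au := by
  intro h
  have := H.leg_au v h
  rw [H.deg_v] at this
  omega

lemma v_not_mem_su [DecidableRel T.Adj] {u v : V} (H : Half T u v) :
    v ∉ Branch T u H.su := by
  intro h
  have := H.leg_su v h
  rw [H.deg_v] at this
  omega

/-- distance from v to a vertex of a leg of u. -/
lemma dist_v_leg (hT : T.IsTree) {u v x w : V} (hx : T.Adj u x) (hvx : v ∉ Branch T u x)
    (hw : w ∈ Branch T u x) : T.dist v w = T.dist v u + T.dist u w :=
  gw hT hx hw hvx

lemma leg_not_path (hT : T.IsTree) {u v x w : V} (hx : T.Adj u x) (hvx : v ∉ Branch T u x)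
    (hw : w ∈ Branch T u x) : w ∉ OnPath T u v := by
  intro hp
  have h1 := dist_v_leg hT hx hvx hw
  have h2 := mem_path hp
  have e1 : T.dist v w = T.dist w v := dcomm T v w
  have e2 : T.dist v u = T.dist u v := dcomm T v u
  have h3 : T.dist u w = 0 := by omega
  have huw : u = w := eq_of_dist_eq_zero hT h3
  exact base_not_mem_branch (huw ▸ hw)

lemma cu_mem_path [DecidableRel T.Adj] {u v : V} (H : Half T u v) : H.cu ∈ OnPath T u v := by
  have h1 := mem_branch H.v_mem
  have h2 : T.dist u H.cu = 1 := SimpleGraph.dist_eq_one_iff_adj.mpr H.adj_cu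
  show T.dist u H.cu + T.dist H.cu v = T.dist u v
  omega

section TwoHalves

variable [DecidableRel T.Adj] {u v : V}

lemma path_core_mem (hT : T.IsTree) (huniq : ∀ w : V, IsCore T w → w = u ∨ w = v)
    (H : Half T u v) (H' : Half T v u) :
    ∀ n w, T.dist u w = n → w ∈ Branch T u H.cu → w ∈ Branch T v H'.cu →
      w ∈ OnPath T u v := by
  intro n
  induction n using Nat.strong_induction_on with
  | _ n ih =>
  intro w hn hwu hwv
  have hwnu : w ≠ u := fun h => base_not_mem_branch (h ▸ hwu)
  have hwnv : w ≠ v := fun h => base_not_mem_branch (h ▸ hwv)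
  have hnpos : 1 ≤ n := by
    rcases Nat.eq_zero_or_pos n with h | h
    · exact absurd (eq_of_dist_eq_zero hT (hn ▸ h)).symm hwnu
    · exact h
  by_cases h1 : n = 1
  · have hcu : T.dist H.cu w = 0 := by
      have := mem_branch hwu; omega
    have : w = H.cu := (eq_of_dist_eq_zero hT hcu).symm
    rw [this]; exact cu_mem_path H
  · -- n ≥ 2
    have hn2 : 2 ≤ n := by omega
    obtain ⟨w', hadj, hd⟩ := last_step hT (Ne.symm hwnu)
    have hdw' : T.dist u w' = n - 1 := by omega
    have hw'u : w' ∈ Branch T u H.cu := by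
      rcases branch_or hT H.adj_cu w' with h | h
      · exact h
      · have := cross hT H.adj_cu hadj (mem_branch hwu) h
        rw [this] at hdw'
        rw [SimpleGraph.dist_self] at hdw'
        omega
    rcases branch_or hT H'.adj_cu w' with hgood | hbad
    swap
    · -- w' = v, impossible
      have hveq : w' = v := cross hT H'.adj_cu hadj (mem_branch hwv) hbad
      have hvw : T.dist v w = 1 := SimpleGraph.dist_eq_one_iff_adj.mpr (hveq ▸ hadj)
      have : T.dist H'.cu w = 0 := by have := mem_branch hwv; omega
      have hwcv : w = H'.cu := (eq_of_dist_eq_zero hT this).symm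
      -- dist u cv = duv - 1 but dist u w = duv + 1
      have h2 := mem_branch H'.v_mem  -- dist v u = dist cv u + 1
      have e1 : T.dist v u = T.dist u v := dcomm T v u
      have e2 : T.dist H'.cu u = T.dist u H'.cu := dcomm T H'.cu u
      have h3 : T.dist u w = T.dist u v + 1 := by
        rw [hveq] at hd
        omega
      rw [hwcv] at h3
      omega
    · have hw'path : w' ∈ OnPath T u v := ih (n-1) (by omega) w' hdw' hw'u hgood
      have hstep := step hT hadj v
      rcases hstep with hA | hB
      · -- dist v w' = dist v w + 1, so w on path
        show T.dist u w + T.dist w v = T.dist u v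
        have h2 := mem_path hw'path
        have e1 : T.dist v w' = T.dist w' v := dcomm T v w'
        have e2 : T.dist v w = T.dist w v := dcomm T v w
        omega
      · -- dist v w = dist v w' + 1 : contradiction, w' would be a core
        exfalso
        have hw'nu : w' ≠ u := by
          intro h; rw [h, SimpleGraph.dist_self] at hdw'; omega
        have hw'nv : w' ≠ v := fun h => base_not_mem_branch (h ▸ hgood)
        obtain ⟨n1, hn1adj, hn1d⟩ := last_step hT (Ne.symm hw'nu)
        obtain ⟨n2, hn2adj, hn2d⟩ := last_step hT (Ne.symm hw'nv)
        have h2 := mem_path hw'path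
        have e1 : T.dist v w' = T.dist w' v := dcomm T v w'
        have e2 : T.dist v w = T.dist w v := dcomm T v w
        have e3 : T.dist v n2 = T.dist n2 v := dcomm T v n2
        have htri : T.dist u v ≤ T.dist u n2 + T.dist n2 v := hT.isConnected.dist_triangle
        have hd1 : T.dist u n1 = n - 2 := by omega
        have hd2 : T.dist u n2 ≥ n := by omega
        have hne12 : n1 ≠ n2 := by
          intro h; rw [h] at hd1; omega
        have hne1w : n1 ≠ w := by
          intro h; rw [h] at hd1; omega
        have hne2w : n2 ≠ w := by
          intro h
          rw [h] at hn2d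
          omega
        have hcore : IsCore T w' :=
          three_nbrs hn1adj.symm hn2adj.symm hadj hne12 hne1w hne2w
        rcases huniq w' hcore with h | h
        · exact hw'nu h
        · exact hw'nv h

end TwoHalves

end TwoCore


namespace TwoCore

open TreeFound

variable {T : SimpleGraph V}

lemma leg_pred (hT : T.IsTree) {u x w : V} (hx : T.Adj u x) (hw : w ∈ Branch T u x)
    (h2 : 2 ≤ T.dist u w) :
    ∃ w', T.Adj w' w ∧ w' ∈ Branch T u x ∧ T.dist u w = T.dist u w' + 1 := by
  have hwu : w ≠ u := by
    intro h; rw [h, SimpleGraph.dist_self] at h2; omega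
  obtain ⟨w', hadj, hd⟩ := last_step hT (Ne.symm hwu)
  refine ⟨w', hadj, ?_, hd⟩
  rcases branch_or hT hx w' with h | h
  · exact h
  · have := cross hT hx hadj (mem_branch hw) h
    rw [this] at hd
    rw [SimpleGraph.dist_self] at hd
    omega

lemma leg_inj [DecidableRel T.Adj] (hT : T.IsTree) {u x : V} (hx : T.Adj u x)
    (hleg : ∀ w ∈ Branch T u x, T.degree w ≤ 2) :
    ∀ n (w w' : V), w ∈ Branch T u x → w' ∈ Branch T u x →
      T.dist u w = n → T.dist u w' = n → w = w' := by
  intro n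
  induction n using Nat.strong_induction_on with
  | _ n ih =>
  intro w w' hw hw' hdw hdw'
  have h1 : 1 ≤ n := hdw ▸ branch_dist_pos hw
  by_cases hn1 : n = 1
  · have e1 : T.dist x w = 0 := by have := mem_branch hw; omega
    have e2 : T.dist x w' = 0 := by have := mem_branch hw'; omega
    rw [← eq_of_dist_eq_zero hT e1, ← eq_of_dist_eq_zero hT e2]
  · have hn2 : 2 ≤ n := by omega
    obtain ⟨p, hpadj, hpmem, hpd⟩ := leg_pred hT hx hw (by omega)
    obtain ⟨p', hpadj', hpmem', hpd'⟩ := leg_pred hT hx hw' (by omega)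
    have hpp : p = p' := ih (n-1) (by omega) p p' hpmem hpmem' (by omega) (by omega)
    subst hpp
    by_contra hne
    have hpnu : p ≠ u := by
      intro h; rw [h] at hpd; rw [SimpleGraph.dist_self] at hpd; omega
    obtain ⟨q, hqadj, hqd⟩ := last_step hT (Ne.symm hpnu)
    have hqw : q ≠ w := by intro h; rw [h] at hqd; omega
    have hqw' : q ≠ w' := by intro h; rw [h] at hqd; omega
    have : 3 ≤ T.degree p := three_nbrs hpadj hpadj' hqadj.symm hne hqw.symm hqw'.symm
    have := hleg p hpmem
    omega

lemma leg_between [DecidableRel T.Adj] (hT : T.IsTree) {u x : V} (hx : T.Adj u x)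
    (hleg : ∀ w ∈ Branch T u x, T.degree w ≤ 2) :
    ∀ k (w w' : V), w ∈ Branch T u x → w' ∈ Branch T u x →
      T.dist u w' = T.dist u w + k → T.dist w w' + T.dist u w = T.dist u w' := by
  intro k
  induction k with
  | zero =>
    intro w w' hw hw' hk
    have : w = w' := leg_inj hT hx hleg (T.dist u w) w w' hw hw' rfl (by omega)
    rw [this, SimpleGraph.dist_self]
    omega
  | succ k ih =>
    intro w w' hw hw' hk
    obtain ⟨p, hpadj, hpmem, hpd⟩ := leg_pred hT hx hw' (by
      have := branch_dist_pos hw; omega)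
    have hIH := ih w p hw hpmem (by omega)
    have htri1 : T.dist w w' ≤ T.dist w p + T.dist p w' := hT.isConnected.dist_triangle
    have htri2 : T.dist u w' ≤ T.dist u w + T.dist w w' := hT.isConnected.dist_triangle
    have hp1 : T.dist p w' = 1 := SimpleGraph.dist_eq_one_iff_adj.mpr hpadj
    omega

section TwoHalves

variable [DecidableRel T.Adj] {u v : V}

lemma au_not_path (hT : T.IsTree) (H : Half T u v) {w : V} (hw : w ∈ Branch T u H.au) :
    w ∉ OnPath T u v :=
  leg_not_path hT H.adj_au (v_not_mem_au H) hw

lemma su_not_path (hT : T.IsTree) (H : Half T u v) {w : V} (hw : w ∈ Branch T u H.su) :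
    w ∉ OnPath T u v :=
  leg_not_path hT H.adj_su (v_not_mem_su H) hw

lemma zone_cover (hT : T.IsTree) (huniq : ∀ w : V, IsCore T w → w = u ∨ w = v)
    (H : Half T u v) (H' : Half T v u) (w : V) :
    w = u ∨ w = v ∨ w ∈ Branch T u H.su ∨ w ∈ Branch T u H.au ∨
    w ∈ Branch T v H'.su ∨ w ∈ Branch T v H'.au ∨
    (w ∈ OnPath T u v ∧ w ≠ u ∧ w ≠ v ∧ w ∈ Branch T u H.cu ∧ w ∈ Branch T v H'.cu) := by
  by_cases h1 : w = u
  · exact Or.inl h1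
  by_cases h2 : w = v
  · exact Or.inr (Or.inl h2)
  rcases H.coverage hT w h1 with h | h | h
  · exact Or.inr (Or.inr (Or.inl h))
  · exact Or.inr (Or.inr (Or.inr (Or.inl h)))
  rcases H'.coverage hT w h2 with h' | h' | h'
  · exact Or.inr (Or.inr (Or.inr (Or.inr (Or.inl h'))))
  · exact Or.inr (Or.inr (Or.inr (Or.inr (Or.inr (Or.inl h')))))
  exact Or.inr (Or.inr (Or.inr (Or.inr (Or.inr (Or.inr
    ⟨path_core_mem hT huniq H H' (T.dist u w) w rfl h h', h1, h2, h, h'⟩)))))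

lemma path_interior_branches (hT : T.IsTree) (huniq : ∀ w : V, IsCore T w → w = u ∨ w = v)
    (H : Half T u v) (H' : Half T v u) {w : V} (hw : w ∈ OnPath T u v)
    (h1 : w ≠ u) (h2 : w ≠ v) :
    w ∈ Branch T u H.cu ∧ w ∈ Branch T v H'.cu := by
  rcases zone_cover hT huniq H H' w with h | h | h | h | h | h | h
  · exact absurd h h1
  · exact absurd h h2
  · exact absurd hw (su_not_path hT H h)
  · exact absurd hw (au_not_path hT H h)
  · exact absurd (path_symm hw) (su_not_path hT H' h)
  · exact absurd (path_symm hw) (au_not_path hT H' h)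
  · exact ⟨h.2.2.2.1, h.2.2.2.2⟩

lemma path_inj (hT : T.IsTree) (huniq : ∀ w : V, IsCore T w → w = u ∨ w = v)
    (H : Half T u v) (H' : Half T v u) :
    ∀ n (x y : V), x ∈ OnPath T u v → y ∈ OnPath T u v →
      T.dist u x = n → T.dist u y = n → x = y := by
  intro n
  induction n using Nat.strong_induction_on with
  | _ n ih =>
  intro x y hx hy hdx hdy
  by_cases h0 : n = 0
  · have hx0 : T.dist u x = 0 := by omega
    have hy0 : T.dist u y = 0 := by omega
    rw [← eq_of_dist_eq_zero hT hx0]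
    exact eq_of_dist_eq_zero hT hy0
  by_cases hduv : n = T.dist u v
  · have hx2 : T.dist x v = 0 := by have := mem_path hx; omega
    have hy2 : T.dist y v = 0 := by have := mem_path hy; omega
    rw [eq_of_dist_eq_zero hT hx2, eq_of_dist_eq_zero hT hy2]
  have hnduv : n < T.dist u v := by
    have := mem_path hx
    omega
  have hxu : x ≠ u := by intro h; rw [h, SimpleGraph.dist_self] at hdx; omega
  have hyu : y ≠ u := by intro h; rw [h, SimpleGraph.dist_self] at hdy; omega
  obtain ⟨x', hxadj, hxp, hxd⟩ := path_nbr_u hT hx hxu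
  obtain ⟨y', hyadj, hyp, hyd⟩ := path_nbr_u hT hy hyu
  have hxy' : x' = y' := ih (n-1) (by omega) x' y' hxp hyp (by omega) (by omega)
  subst hxy'
  by_contra hne
  by_cases hz1 : n = 1
  · -- x' = u; x and y are neighbors of u on the path, so both equal cu
    have hxu' : x' = u := (eq_of_dist_eq_zero hT (by omega : T.dist u x' = 0)).symm
    subst hxu'
    have hxcu : x = H.cu := by
      rcases H.neighbors hxadj with h | h | h
      · exact absurd hx (su_not_path hT H (by rw [h]; exact branch_self H.adj_su))
      · exact absurd hx (au_not_path hT H (by rw [h]; exact branch_self H.adj_au))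
      · exact h
    have hycu : y = H.cu := by
      rcases H.neighbors hyadj with h | h | h
      · exact absurd hy (su_not_path hT H (by rw [h]; exact branch_self H.adj_su))
      · exact absurd hy (au_not_path hT H (by rw [h]; exact branch_self H.adj_au))
      · exact h
    exact hne (hxcu.trans hycu.symm)
  · -- x' is interior; it has three neighbors
    have hx'nu : x' ≠ u := by
      intro h; rw [h, SimpleGraph.dist_self] at hxd; omega
    have hx'nv : x' ≠ v := by
      intro h
      rw [h] at hxd
      omega
    obtain ⟨q, hqadj, hqd⟩ := last_step hT (Ne.symm hx'nu)
    have hqx : q ≠ x := by intro h; rw [h] at hqd; omega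
    have hqy : q ≠ y := by intro h; rw [h] at hqd; omega
    have hcore : 3 ≤ T.degree x' := three_nbrs hxadj hyadj hqadj.symm hne hqx.symm hqy.symm
    rcases huniq x' hcore with h | h
    · exact hx'nu h
    · exact hx'nv h

lemma path_between (hT : T.IsTree) (huniq : ∀ w : V, IsCore T w → w = u ∨ w = v)
    (H : Half T u v) (H' : Half T v u) :
    ∀ k (x y : V), x ∈ OnPath T u v → y ∈ OnPath T u v →
      T.dist u y = T.dist u x + k → T.dist x y + T.dist u x = T.dist u y := by
  intro k
  induction k with
  | zero =>
    intro x y hx hy hk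
    have : x = y := path_inj hT huniq H H' (T.dist u x) x y hx hy rfl (by omega)
    rw [this, SimpleGraph.dist_self]
    omega
  | succ k ih =>
    intro x y hx hy hk
    have hyu : y ≠ u := by
      intro h; rw [h, SimpleGraph.dist_self] at hk; omega
    obtain ⟨p, hpadj, hpmem, hpd⟩ := path_nbr_u hT hy hyu
    have hIH := ih x p hx hpmem (by omega)
    have htri1 : T.dist x y ≤ T.dist x p + T.dist p y := hT.isConnected.dist_triangle
    have htri2 : T.dist u y ≤ T.dist u x + T.dist x y := hT.isConnected.dist_triangle
    have hp1 : T.dist p y = 1 := SimpleGraph.dist_eq_one_iff_adj.mpr hpadj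
    omega

end TwoHalves

end TwoCore


namespace TwoCore

open TreeFound

variable {T : SimpleGraph V} [DecidableRel T.Adj] {u v : V}

/-- u-side zone: the legs of u. -/
def ZU (T : SimpleGraph V) [DecidableRel T.Adj] {u v : V} (H : Half T u v) (w : V) : Prop :=
  w ∈ Branch T u H.au ∨ w = H.su

lemma zu_not_in_au_branch {H : Half T u v} {w : V} (h : ZU T H w)
    (h2 : w ∉ Branch T u H.au) : w = H.su := by
  rcases h with h | h
  · exact absurd h h2
  · exact h

lemma su_mem_su_branch (H : Half T u v) : H.su ∈ Branch T u H.su := branch_self H.adj_su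

lemma mem_su_branch_iff (H : Half T u v) {w : V} : w ∈ Branch T u H.su ↔ w = H.su := by
  rw [H.short_su]; rfl

lemma zu_dist_pos {H : Half T u v} {w : V} (h : ZU T H w) : 1 ≤ T.dist u w := by
  rcases h with h | h
  · exact branch_dist_pos h
  · rw [h, SimpleGraph.dist_eq_one_iff_adj.mpr H.adj_su]

lemma zu_ne_u {H : Half T u v} {w : V} (h : ZU T H w) : w ≠ u := by
  intro he; have := zu_dist_pos h; rw [he, SimpleGraph.dist_self] at this; omega

lemma zp_not_zu (hT : T.IsTree) {H : Half T u v} {w : V} (hp : w ∈ OnPath T u v)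
    (h : ZU T H w) : False := by
  rcases h with h | h
  · exact au_not_path hT H h hp
  · exact su_not_path hT H (h ▸ su_mem_su_branch H) hp

/-- distance from v over u to the u-side. -/
lemma zu_dist_v (hT : T.IsTree) (H : Half T u v) {w : V} (h : ZU T H w) :
    T.dist v w = T.dist u v + T.dist u w := by
  have e : T.dist v u = T.dist u v := dcomm T v u
  rcases h with h | h
  · rw [gw hT H.adj_au h (v_not_mem_au H), e]
  · subst h
    rw [gw hT H.adj_su (su_mem_su_branch H) (v_not_mem_su H), e]

lemma zu_zv_false (hT : T.IsTree) (huv : u ≠ v) (H : Half T u v) (H' : Half T v u)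
    {w : V} (h : ZU T H w) (h' : ZU T H' w) : False := by
  have h1 := zu_dist_v hT H h
  have h2 := zu_dist_v hT H' h'
  have e1 : T.dist v u = T.dist u v := dcomm T v u
  have hd := dist_pos_of_ne hT huv
  omega

/-- evaluation: u-side candidate against vertex not on the u-side. -/
lemma zu_eval_out (hT : T.IsTree) (H : Half T u v) {τ w : V} (hτ : ZU T H τ)
    (hw1 : w ∉ Branch T u H.au) (hw2 : w ≠ H.su) :
    T.dist τ w = T.dist u τ + T.dist u w := by
  have e1 : T.dist w τ = T.dist τ w := dcomm T w τ
  have e2 : T.dist w u = T.dist u w := dcomm T w u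
  rcases hτ with h | h
  · have := gw hT H.adj_au h hw1
    omega
  · subst h
    have hw3 : w ∉ Branch T u H.su := fun hc => hw2 ((mem_su_branch_iff H).mp hc)
    have := gw hT H.adj_su (su_mem_su_branch H) hw3
    have e3 : T.dist u H.su = 1 := SimpleGraph.dist_eq_one_iff_adj.mpr H.adj_su
    omega

/-- evaluation: u-side candidate against u-side vertex (disjunctive form). -/
lemma zu_eval_in (hT : T.IsTree) (H : Half T u v) {τ w : V} (hτ : ZU T H τ)
    (hw : ZU T H w) :
    (T.dist τ w + T.dist u τ = T.dist u w) ∨ (T.dist τ w + T.dist u w = T.dist u τ) ∨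
    (T.dist τ w = T.dist u τ + T.dist u w) := by
  have e3 : T.dist u H.su = 1 := SimpleGraph.dist_eq_one_iff_adj.mpr H.adj_su
  rcases hτ with hτ | hτ <;> rcases hw with hw | hw
  · rcases le_total (T.dist u τ) (T.dist u w) with hle | hle
    · obtain ⟨k, hk⟩ := Nat.le.dest hle
      left
      exact leg_between hT H.adj_au H.leg_au k τ w hτ hw (by omega)
    · obtain ⟨k, hk⟩ := Nat.le.dest hle
      right; left
      have := leg_between hT H.adj_au H.leg_au k w τ hw hτ (by omega)
      have e : T.dist w τ = T.dist τ w := dcomm T w τ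
      omega
  · subst hw
    right; right
    have hτ2 : τ ∉ Branch T u H.su := fun hc =>
      branch_disjoint hT H.adj_au H.adj_su (Ne.symm H.ne_su_au) hτ hc
    have := gw hT H.adj_su (su_mem_su_branch H) hτ2
    have e4 : T.dist τ u = T.dist u τ := dcomm T τ u
    omega
  · subst hτ
    right; right
    have hw2 : H.su ∉ Branch T u H.au := fun hc =>
      branch_disjoint hT H.adj_au H.adj_su (Ne.symm H.ne_su_au) hc (su_mem_su_branch H)
    have := gw hT H.adj_au hw hw2
    have e2 : T.dist H.su u = T.dist u H.su := dcomm T H.su u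
    omega
  · subst hτ; subst hw
    left
    rw [SimpleGraph.dist_self]
    omega

/-- evaluation: path candidate against u-side vertex. -/
lemma zp_eval_zu (hT : T.IsTree) (H : Half T u v) {a w : V} (ha : a ∈ OnPath T u v)
    (hw : ZU T H w) : T.dist a w = T.dist u a + T.dist u w := by
  have h1 : a ∉ Branch T u H.au := fun hc => au_not_path hT H hc ha
  have h2 : a ≠ H.su := fun hc => su_not_path hT H (hc ▸ su_mem_su_branch H) ha
  have h3 := zu_eval_out hT H hw h1 h2
  have e : T.dist w a = T.dist a w := dcomm T w a
  omega

/-- evaluation: path candidate against path vertex. -/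
lemma zp_eval_zp (hT : T.IsTree) (huniq : ∀ w : V, IsCore T w → w = u ∨ w = v)
    (H : Half T u v) (H' : Half T v u) {a w : V}
    (ha : a ∈ OnPath T u v) (hw : w ∈ OnPath T u v) :
    (T.dist a w + T.dist u a = T.dist u w) ∨ (T.dist a w + T.dist u w = T.dist u a) := by
  rcases le_total (T.dist u a) (T.dist u w) with hle | hle
  · obtain ⟨k, hk⟩ := Nat.le.dest hle
    left
    exact path_between hT huniq H H' k a w ha hw (by omega)
  · obtain ⟨k, hk⟩ := Nat.le.dest hle
    right
    have := path_between hT huniq H H' k w a hw ha (by omega)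
    have e : T.dist w a = T.dist a w := dcomm T w a
    omega

end TwoCore


namespace TwoCore

open TreeFound

variable {T : SimpleGraph V} [DecidableRel T.Adj] {u v : V}

lemma legA_eval (hT : T.IsTree) (H : Half T u v) {τ w : V} (hτ : τ ∈ Branch T u H.au)
    (hw : w ∉ Branch T u H.au) : T.dist τ w = T.dist u τ + T.dist u w := by
  by_cases hsu : w ∈ Branch T u H.su
  · have hw2 : w = H.su := (mem_su_branch_iff H).mp hsu
    subst hw2
    have hτ2 : τ ∉ Branch T u H.su := fun hc =>
      branch_disjoint hT H.adj_au H.adj_su (Ne.symm H.ne_su_au) hτ hc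
    have h1 := gw hT H.adj_su (su_mem_su_branch H) hτ2
    have e1 : T.dist τ u = T.dist u τ := dcomm T τ u
    have e2 : T.dist u H.su = 1 := SimpleGraph.dist_eq_one_iff_adj.mpr H.adj_su
    omega
  · have h1 := gw hT H.adj_au hτ hw
    have e1 : T.dist w τ = T.dist τ w := dcomm T w τ
    have e2 : T.dist w u = T.dist u w := dcomm T w u
    omega

lemma legA_eval_in (hT : T.IsTree) (H : Half T u v) {τ w : V} (hτ : τ ∈ Branch T u H.au)
    (hw : w ∈ Branch T u H.au) :
    (T.dist τ w + T.dist u τ = T.dist u w) ∨ (T.dist τ w + T.dist u w = T.dist u τ) := by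
  rcases le_total (T.dist u τ) (T.dist u w) with hle | hle
  · obtain ⟨k, hk⟩ := Nat.le.dest hle
    left
    exact leg_between hT H.adj_au H.leg_au k τ w hτ hw (by omega)
  · obtain ⟨k, hk⟩ := Nat.le.dest hle
    right
    have := leg_between hT H.adj_au H.leg_au k w τ hw hτ (by omega)
    have e : T.dist w τ = T.dist τ w := dcomm T w τ
    omega

lemma zu_not_zv (hT : T.IsTree) (huv : u ≠ v) (H : Half T u v) (H' : Half T v u)
    {w : V} (h : ZU T H w) : ¬ ZU T H' w := fun h' => zu_zv_false hT huv H H' h h'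

/-- evaluation: v-side candidate against a u-side vertex. -/
lemma zv_eval_zu (hT : T.IsTree) (huv : u ≠ v) (H : Half T u v) (H' : Half T v u)
    {β w : V} (hβ : ZU T H' β) (hw : ZU T H w) :
    T.dist β w = T.dist v β + T.dist v w := by
  have h1 : w ∉ Branch T v H'.au := fun hc => zu_zv_false hT huv H H' hw (Or.inl hc)
  have h2 : w ≠ H'.su := fun hc => zu_zv_false hT huv H H' hw (Or.inr hc)
  exact zu_eval_out hT H' hβ h1 h2

/-- evaluation: v-side candidate against a path vertex. -/
lemma zv_eval_zp (hT : T.IsTree) (H' : Half T v u) {β w : V} (hβ : ZU T H' β)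
    (hw : w ∈ OnPath T u v) : T.dist β w = T.dist v β + T.dist v w := by
  have h1 := zp_eval_zu hT H' (path_symm hw) hβ
  have e1 : T.dist w β = T.dist β w := dcomm T w β
  have e2 : T.dist w v = T.dist v w := dcomm T w v
  omega

lemma zone3 (hT : T.IsTree) (huniq : ∀ w : V, IsCore T w → w = u ∨ w = v)
    (H : Half T u v) (H' : Half T v u) (w : V) :
    w ∈ OnPath T u v ∨ ZU T H w ∨ ZU T H' w := by
  rcases zone_cover hT huniq H H' w with h | h | h | h | h | h | h
  · subst h; exact Or.inl u_mem_path
  · subst h; exact Or.inl v_mem_path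
  · exact Or.inr (Or.inl (Or.inr ((mem_su_branch_iff H).mp h)))
  · exact Or.inr (Or.inl (Or.inl h))
  · exact Or.inr (Or.inr (Or.inr ((mem_su_branch_iff H').mp h)))
  · exact Or.inr (Or.inr (Or.inl h))
  · exact Or.inl h.1

lemma exists_zu_landmark (hT : T.IsTree) (H : Half T u v) {L : Set V}
    (hL : IsLandmarkSet T L) : ∃ α ∈ L, ZU T H α := by
  by_cases h1 : H.au ∈ L
  · exact ⟨H.au, h1, Or.inl (branch_self H.adj_au)⟩
  by_cases h2 : H.su ∈ L
  · exact ⟨H.su, h2, Or.inr rfl⟩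
  obtain ⟨τ, hτL, τ', hτL', hne, hsep, hsep'⟩ := hL H.au H.su (Ne.symm H.ne_su_au) h1 h2
  refine ⟨τ, hτL, ?_⟩
  by_contra hτz
  have hτ1 : τ ∉ Branch T u H.au := fun hc => hτz (Or.inl hc)
  have hτ2 : τ ≠ H.su := fun hc => hτz (Or.inr hc)
  apply hsep
  have h3 := legA_eval hT H (branch_self H.adj_au) hτ1
  have h4 := zu_eval_out hT H (Or.inr rfl) hτ1 hτ2
  have e1 : T.dist H.au τ = T.dist τ H.au := dcomm T H.au τ
  have e2 : T.dist H.su τ = T.dist τ H.su := dcomm T H.su τ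
  have e3 : T.dist u H.au = 1 := SimpleGraph.dist_eq_one_iff_adj.mpr H.adj_au
  have e4 : T.dist u H.su = 1 := SimpleGraph.dist_eq_one_iff_adj.mpr H.adj_su
  omega

lemma two_sep {L' : Set V} {t1 t2 x y : V} (h1 : t1 ∈ L') (h2 : t2 ∈ L') (hne : t1 ≠ t2)
    (hs1 : T.dist t1 x ≠ T.dist t1 y) (hs2 : T.dist t2 x ≠ T.dist t2 y) :
    HasTwoSeparators T L' x y := ⟨t1, h1, t2, h2, hne, hs1, hs2⟩

lemma two_of_three {L' : Set V} {t1 t2 t3 x y : V} (h1 : t1 ∈ L') (h2 : t2 ∈ L')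
    (h3 : t3 ∈ L') (n12 : t1 ≠ t2) (n13 : t1 ≠ t3) (n23 : t2 ≠ t3)
    (h : (T.dist t1 x ≠ T.dist t1 y ∧ T.dist t2 x ≠ T.dist t2 y) ∨
         (T.dist t1 x ≠ T.dist t1 y ∧ T.dist t3 x ≠ T.dist t3 y) ∨
         (T.dist t2 x ≠ T.dist t2 y ∧ T.dist t3 x ≠ T.dist t3 y)) :
    HasTwoSeparators T L' x y := by
  rcases h with ⟨a, b⟩ | ⟨a, b⟩ | ⟨a, b⟩
  · exact two_sep h1 h2 n12 a b
  · exact two_sep h1 h3 n13 a b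
  · exact two_sep h2 h3 n23 a b

lemma fallback {L : Set V} {c x y : V} (hL : IsLandmarkSet T L)
    (hc : T.dist c x = T.dist c y) (hxy : x ≠ y) (hx : x ∉ L) (hy : y ∉ L) :
    HasTwoSeparators T (L \ {c}) x y := by
  obtain ⟨τ1, h1, τ2, h2, hne, hs1, hs2⟩ := hL x y hxy hx hy
  refine ⟨τ1, ⟨h1, ?_⟩, τ2, ⟨h2, ?_⟩, hne, hs1, hs2⟩
  · intro he
    rw [Set.mem_singleton_iff] at he
    exact hs1 (he ▸ hc)
  · intro he
    rw [Set.mem_singleton_iff] at he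
    exact hs2 (he ▸ hc)

lemma hts_symm {L' : Set V} {x y : V} (h : HasTwoSeparators T L' x y) :
    HasTwoSeparators T L' y x := by
  obtain ⟨τ1, h1, τ2, h2, hne, hs1, hs2⟩ := h
  exact ⟨τ1, h1, τ2, h2, hne, Ne.symm hs1, Ne.symm hs2⟩

lemma diff_ssubset {L : Set V} {c : V} (hc : c ∈ L) : L \ {c} ⊂ L := by
  constructor
  · exact Set.diff_subset
  · intro hsub
    have := hsub hc
    simp at this

end TwoCore


namespace TwoCore

open TreeFound

variable {T : SimpleGraph V} [DecidableRel T.Adj] {u v : V}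

lemma part2_keyA (hT : T.IsTree) (huv : u ≠ v)
    (huniq : ∀ w : V, IsCore T w → w = u ∨ w = v)
    (H : Half T u v) (H' : Half T v u) {S : Set V}
    {c1 c2 β : V} (hc1 : c1 ∈ S) (hc2 : c2 ∈ S) (hβ : β ∈ S)
    (hc1A : c1 ∈ Branch T u H.au) (hc2A : c2 ∈ Branch T u H.au) (hβz : ZU T H' β)
    (hne : c1 ≠ c2) {x y : V} (hx : x ∈ Branch T u H.au) (hy : y ∉ Branch T u H.au)
    (hyβ : y ≠ β) : HasTwoSeparators T S x y := by
  have hc1β : c1 ≠ β := fun he =>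
    zu_zv_false hT huv H H' (Or.inl hc1A) (by rw [he]; exact hβz)
  have hc2β : c2 ≠ β := fun he =>
    zu_zv_false hT huv H H' (Or.inl hc2A) (by rw [he]; exact hβz)
  have hduv : 1 ≤ T.dist u v := dist_pos_of_ne hT huv
  have hp1 : 1 ≤ T.dist u c1 := branch_dist_pos hc1A
  have hp2 : 1 ≤ T.dist u c2 := branch_dist_pos hc2A
  have hp12 : T.dist u c1 ≠ T.dist u c2 := fun he =>
    hne (leg_inj hT H.adj_au H.leg_au (T.dist u c1) c1 c2 hc1A hc2A rfl he.symm)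
  have hk : 1 ≤ T.dist v β := zu_dist_pos hβz
  have hπx : 1 ≤ T.dist u x := branch_dist_pos hx
  have evc1x := legA_eval_in hT H hc1A hx
  have evc2x := legA_eval_in hT H hc2A hx
  have evβx := zv_eval_zu hT huv H H' hβz (Or.inl hx)
  have evvx := zu_dist_v hT H (Or.inl hx)
  have evc1y := legA_eval hT H hc1A hy
  have evc2y := legA_eval hT H hc2A hy
  refine two_of_three hc1 hc2 hβ hne hc1β hc2β ?_
  rcases zone3 hT huniq H H' y with hyz | hyz | hyz
  · have evβy := zv_eval_zp hT H' hβz hyz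
    have hpy := mem_path hyz
    have e1 : T.dist y v = T.dist v y := dcomm T y v
    omega
  · have hysu : y = H.su := zu_not_in_au_branch hyz hy
    subst hysu
    have evβy := zv_eval_zu hT huv H H' hβz (Or.inr rfl)
    have evvy := zu_dist_v hT H (Or.inr rfl)
    have e1 : T.dist u H.su = 1 := SimpleGraph.dist_eq_one_iff_adj.mpr H.adj_su
    omega
  · have evβy := zu_eval_in hT H' hβz hyz
    have evuy := zu_dist_v hT H' hyz
    have hky : 1 ≤ T.dist v y := zu_dist_pos hyz
    have e1 : T.dist v u = T.dist u v := dcomm T v u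
    omega

lemma part2_main (hT : T.IsTree) (huv : u ≠ v)
    (huniq : ∀ w : V, IsCore T w → w = u ∨ w = v)
    (H : Half T u v) (H' : Half T v u) {L : Set V} (hL : IsLandmarkSet T L)
    (hmin : ∀ L' : Set V, L' ⊂ L → ¬ IsLandmarkSet T L') (x0 : V)
    (hx0 : IsLongLeg T u x0) : (L ∩ Branch T u x0).ncard ≤ 2 := by
  obtain ⟨⟨hadj, hleg⟩, hlong⟩ := hx0
  have hx0au : x0 = H.au := by
    rcases H.neighbors hadj with h | h | h
    · exfalso; subst h; exact hlong H.short_su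
    · exact h
    · exfalso
      subst h
      have := hleg v H.v_mem
      rw [H.deg_v] at this
      omega
  subst hx0au
  by_contra hcon
  push_neg at hcon
  rw [Set.two_lt_ncard_iff] at hcon
  obtain ⟨c1, c2, c3, h1, h2, h3, n12, n13, n23⟩ := hcon
  obtain ⟨hc1L, hc1A⟩ := h1
  obtain ⟨hc2L, hc2A⟩ := h2
  obtain ⟨hc3L, hc3A⟩ := h3
  obtain ⟨β, hβL, hβz⟩ := exists_zu_landmark hT H' hL
  apply hmin (L \ {c3}) (diff_ssubset hc3L)
  have hc1' : c1 ∈ L \ {c3} := ⟨hc1L, by simp [n13]⟩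
  have hc2' : c2 ∈ L \ {c3} := ⟨hc2L, by simp [n23]⟩
  have hβ' : β ∈ L \ {c3} := ⟨hβL, by
    simp only [Set.mem_singleton_iff]
    intro he
    exact zu_zv_false hT huv H H' (Or.inl (he ▸ hc3A)) hβz⟩
  intro x y hxy hx hy
  by_cases hxA : x ∈ Branch T u H.au <;> by_cases hyA : y ∈ Branch T u H.au
  · -- both in the long leg
    have hc1β : c1 ≠ β := fun he =>
      zu_zv_false hT huv H H' (Or.inl hc1A) (by rw [he]; exact hβz)
    have hc2β : c2 ≠ β := fun he =>
      zu_zv_false hT huv H H' (Or.inl hc2A) (by rw [he]; exact hβz)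
    have hπ : T.dist u x ≠ T.dist u y := fun he =>
      hxy (leg_inj hT H.adj_au H.leg_au (T.dist u x) x y hxA hyA rfl he.symm)
    have hp12 : T.dist u c1 ≠ T.dist u c2 := fun he =>
      n12 (leg_inj hT H.adj_au H.leg_au (T.dist u c1) c1 c2 hc1A hc2A rfl he.symm)
    have evc1x := legA_eval_in hT H hc1A hxA
    have evc1y := legA_eval_in hT H hc1A hyA
    have evc2x := legA_eval_in hT H hc2A hxA
    have evc2y := legA_eval_in hT H hc2A hyA
    have evβx := zv_eval_zu hT huv H H' hβz (Or.inl hxA)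
    have evβy := zv_eval_zu hT huv H H' hβz (Or.inl hyA)
    have evvx := zu_dist_v hT H (Or.inl hxA)
    have evvy := zu_dist_v hT H (Or.inl hyA)
    have hduv : 1 ≤ T.dist u v := dist_pos_of_ne hT huv
    refine two_of_three hc1' hc2' hβ' n12 hc1β hc2β ?_
    omega
  · exact part2_keyA hT huv huniq H H' hc1' hc2' hβ' hc1A hc2A hβz n12 hxA hyA
      (fun he => hy (he ▸ hβ'))
  · exact hts_symm (part2_keyA hT huv huniq H H' hc1' hc2' hβ' hc1A hc2A hβz n12 hyA hxA
      (fun he => hx (he ▸ hβ')))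
  · -- neither in the long leg
    by_cases hd : T.dist u x = T.dist u y
    · refine fallback hL ?_ hxy ?_ ?_
      · have e1 := legA_eval hT H hc3A hxA
        have e2 := legA_eval hT H hc3A hyA
        omega
      · intro hxL
        exact hx ⟨hxL, by
          simp only [Set.mem_singleton_iff]
          intro he
          exact hxA (he ▸ hc3A)⟩
      · intro hyL
        exact hy ⟨hyL, by
          simp only [Set.mem_singleton_iff]
          intro he
          exact hyA (he ▸ hc3A)⟩
    · refine two_sep hc1' hc2' n12 ?_ ?_
      · have e1 := legA_eval hT H hc1A hxA
        have e2 := legA_eval hT H hc1A hyA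
        omega
      · have e1 := legA_eval hT H hc2A hxA
        have e2 := legA_eval hT H hc2A hyA
        omega

end TwoCore


namespace TwoCore

open TreeFound

variable {T : SimpleGraph V} [DecidableRel T.Adj] {u v : V}

lemma zu_eval_zp (hT : T.IsTree) (H : Half T u v) {α x : V} (hα : ZU T H α)
    (hx : x ∈ OnPath T u v) : T.dist α x = T.dist u α + T.dist u x := by
  have h := zp_eval_zu hT H hx hα
  have e1 : T.dist x α = T.dist α x := dcomm T x α
  omega

lemma zp_eval_zv (hT : T.IsTree) (H' : Half T v u) {a y : V} (ha : a ∈ OnPath T u v)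
    (hy : ZU T H' y) : T.dist a y = T.dist v a + T.dist v y := by
  have h := zv_eval_zp hT H' hy ha
  have e1 : T.dist y a = T.dist a y := dcomm T y a
  omega

lemma part1_main (hT : T.IsTree) (huv : u ≠ v)
    (huniq : ∀ w : V, IsCore T w → w = u ∨ w = v)
    (H : Half T u v) (H' : Half T v u) {L : Set V} (hL : IsLandmarkSet T L)
    (hmin : ∀ L' : Set V, L' ⊂ L → ¬ IsLandmarkSet T L')
    {a b : V} (haL : a ∈ L) (hbL : b ∈ L)
    (ha : a ≠ u ∧ a ≠ v ∧ T.dist u a + T.dist a v = T.dist u v)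
    (hb : b ≠ u ∧ b ≠ v ∧ T.dist u b + T.dist b v = T.dist u v) : a = b := by
  by_contra hab
  apply hmin (L \ {b}) (diff_ssubset hbL)
  have hap : a ∈ OnPath T u v := ha.2.2
  have hbp : b ∈ OnPath T u v := hb.2.2
  obtain ⟨α, hαL, hαz⟩ := exists_zu_landmark hT H hL
  obtain ⟨β, hβL, hβz⟩ := exists_zu_landmark hT H' hL
  have hαb : α ≠ b := fun he => zp_not_zu hT hbp (he ▸ hαz)
  have hβb : β ≠ b := fun he => zp_not_zu hT (path_symm hbp) (he ▸ hβz)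
  have ha' : a ∈ L \ {b} := ⟨haL, by simpa using hab⟩
  have hα' : α ∈ L \ {b} := ⟨hαL, by simpa using hαb⟩
  have hβ' : β ∈ L \ {b} := ⟨hβL, by simpa using hβb⟩
  have haα : a ≠ α := fun he => zp_not_zu hT hap (he ▸ hαz)
  have haβ : a ≠ β := fun he => zp_not_zu hT (path_symm hap) (he ▸ hβz)
  have hαβ : α ≠ β := fun he => zu_zv_false hT huv H H' hαz (he ▸ hβz)
  have hduv : 1 ≤ T.dist u v := dist_pos_of_ne hT huv
  have hga : 1 ≤ T.dist u a := dist_pos_of_ne hT (fun h => ha.1 h.symm)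
  have hgav : 1 ≤ T.dist a v := dist_pos_of_ne hT ha.2.1
  have hpa : T.dist u a + T.dist a v = T.dist u v := ha.2.2
  have hα1 : 1 ≤ T.dist u α := zu_dist_pos hαz
  have hβ1 : 1 ≤ T.dist v β := zu_dist_pos hβz
  have eav : T.dist a v = T.dist v a := dcomm T a v
  -- key blocks for mixed zone pairs
  have kPU : ∀ x y : V, x ∈ OnPath T u v → ZU T H y →
      HasTwoSeparators T (L \ {b}) x y := by
    intro x y hxz hyz
    have evax := zp_eval_zp hT huniq H H' hap hxz
    have evay := zp_eval_zu hT H hap hyz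
    have evαx := zu_eval_zp hT H hαz hxz
    have evαy := zu_eval_in hT H hαz hyz
    have evβx := zv_eval_zp hT H' hβz hxz
    have evβy := zv_eval_zu hT huv H H' hβz hyz
    have evvy := zu_dist_v hT H hyz
    have hy1 : 1 ≤ T.dist u y := zu_dist_pos hyz
    have hpx := mem_path hxz
    have exv : T.dist x v = T.dist v x := dcomm T x v
    exact two_of_three ha' hα' hβ' haα haβ hαβ (by omega)
  have kPW : ∀ x y : V, x ∈ OnPath T u v → ZU T H' y →
      HasTwoSeparators T (L \ {b}) x y := by
    intro x y hxz hyz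
    have evax := zp_eval_zp hT huniq H H' hap hxz
    have evay := zp_eval_zv hT H' hap hyz
    have evαx := zu_eval_zp hT H hαz hxz
    have evαy := zv_eval_zu hT (Ne.symm huv) H' H hαz hyz
    have evβx := zv_eval_zp hT H' hβz hxz
    have evβy := zu_eval_in hT H' hβz hyz
    have evuy := zu_dist_v hT H' hyz
    have hy1 : 1 ≤ T.dist v y := zu_dist_pos hyz
    have hpx := mem_path hxz
    have exv : T.dist x v = T.dist v x := dcomm T x v
    have euv : T.dist v u = T.dist u v := dcomm T v u
    exact two_of_three ha' hα' hβ' haα haβ hαβ (by omega)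
  have kUW : ∀ x y : V, ZU T H x → ZU T H' y →
      HasTwoSeparators T (L \ {b}) x y := by
    intro x y hxz hyz
    have evax := zp_eval_zu hT H hap hxz
    have evay := zp_eval_zv hT H' hap hyz
    have evαx := zu_eval_in hT H hαz hxz
    have evαy := zv_eval_zu hT (Ne.symm huv) H' H hαz hyz
    have evβx := zv_eval_zu hT huv H H' hβz hxz
    have evβy := zu_eval_in hT H' hβz hyz
    have evvx := zu_dist_v hT H hxz
    have evuy := zu_dist_v hT H' hyz
    have hx1 : 1 ≤ T.dist u x := zu_dist_pos hxz
    have hy1 : 1 ≤ T.dist v y := zu_dist_pos hyz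
    have euv : T.dist v u = T.dist u v := dcomm T v u
    exact two_of_three ha' hα' hβ' haα haβ hαβ (by omega)
  intro x y hxy hx hy
  rcases zone3 hT huniq H H' x with hxz | hxz | hxz <;>
    rcases zone3 hT huniq H H' y with hyz | hyz | hyz
  · -- both on path
    have hπ : T.dist u x ≠ T.dist u y := fun he =>
      hxy (path_inj hT huniq H H' (T.dist u x) x y hxz hyz rfl he.symm)
    have evαx := zu_eval_zp hT H hαz hxz
    have evαy := zu_eval_zp hT H hαz hyz
    have evβx := zv_eval_zp hT H' hβz hxz
    have evβy := zv_eval_zp hT H' hβz hyz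
    have hpx := mem_path hxz
    have hpy := mem_path hyz
    have exv : T.dist x v = T.dist v x := dcomm T x v
    have eyv : T.dist y v = T.dist v y := dcomm T y v
    exact two_sep hα' hβ' hαβ (by omega) (by omega)
  · exact kPU x y hxz hyz
  · exact kPW x y hxz hyz
  · exact hts_symm (kPU y x hyz hxz)
  · -- both u-side
    by_cases hd : T.dist u x = T.dist u y
    · refine fallback hL ?_ hxy ?_ ?_
      · have e1 := zp_eval_zu hT H hbp hxz
        have e2 := zp_eval_zu hT H hbp hyz
        omega
      · intro hxL
        exact hx ⟨hxL, by
          simp only [Set.mem_singleton_iff]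
          intro he
          exact zp_not_zu hT hbp (he ▸ hxz)⟩
      · intro hyL
        exact hy ⟨hyL, by
          simp only [Set.mem_singleton_iff]
          intro he
          exact zp_not_zu hT hbp (he ▸ hyz)⟩
    · have evax := zp_eval_zu hT H hap hxz
      have evay := zp_eval_zu hT H hap hyz
      have evβx := zv_eval_zu hT huv H H' hβz hxz
      have evβy := zv_eval_zu hT huv H H' hβz hyz
      have evvx := zu_dist_v hT H hxz
      have evvy := zu_dist_v hT H hyz
      exact two_sep ha' hβ' haβ (by omega) (by omega)
  · exact kUW x y hxz hyz
  · exact hts_symm (kPW y x hyz hxz)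
  · exact hts_symm (kUW y x hyz hxz)
  · -- both v-side
    by_cases hd : T.dist v x = T.dist v y
    · refine fallback hL ?_ hxy ?_ ?_
      · have e1 := zp_eval_zv hT H' hbp hxz
        have e2 := zp_eval_zv hT H' hbp hyz
        omega
      · intro hxL
        exact hx ⟨hxL, by
          simp only [Set.mem_singleton_iff]
          intro he
          exact zp_not_zu hT (path_symm hbp) (he ▸ hxz)⟩
      · intro hyL
        exact hy ⟨hyL, by
          simp only [Set.mem_singleton_iff]
          intro he
          exact zp_not_zu hT (path_symm hbp) (he ▸ hyz)⟩
    · have evax := zp_eval_zv hT H' hap hxz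
      have evay := zp_eval_zv hT H' hap hyz
      have evαx := zv_eval_zu hT (Ne.symm huv) H' H hαz hxz
      have evαy := zv_eval_zu hT (Ne.symm huv) H' H hαz hyz
      have evux := zu_dist_v hT H' hxz
      have evuy := zu_dist_v hT H' hyz
      exact two_sep ha' hα' haα (by omega) (by omega)

end TwoCore

/-- a tree with no regular cores and exactly two (small) cores `u` and
`v`; every landmark set that is minimal with respect to set inclusion contains at most
one vertex on the path between `u` and `v` (excluding `u` and `v`), and at most two
vertices on each long leg of `u` and of `v`. -/
theorem two_small_cores_minimal_landmark_structure
    (T : SimpleGraph V) [DecidableRel T.Adj] (hT : T.IsTree)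
    (u v : V) (huv : u ≠ v)
    (hu : IsSmallCore T u) (hv : IsSmallCore T v)
    (huniq : ∀ w : V, IsCore T w → w = u ∨ w = v)
    (L : Set V) (hL : IsLandmarkSet T L)
    (hmin : ∀ L' : Set V, L' ⊂ L → ¬ IsLandmarkSet T L') :
    (∀ a ∈ L, ∀ b ∈ L,
      (a ≠ u ∧ a ≠ v ∧ T.dist u a + T.dist a v = T.dist u v) →
      (b ≠ u ∧ b ≠ v ∧ T.dist u b + T.dist b v = T.dist u v) → a = b) ∧
    (∀ x : V, IsLongLeg T u x → (L ∩ Branch T u x).ncard ≤ 2) ∧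
    (∀ x : V, IsLongLeg T v x → (L ∩ Branch T v x).ncard ≤ 2) := by
  obtain ⟨H⟩ := TwoCore.mk_half hT huv hu hv
  obtain ⟨H'⟩ := TwoCore.mk_half hT (Ne.symm huv) hv hu
  have huniq' : ∀ w : V, IsCore T w → w = v ∨ w = u := fun w h => (huniq w h).symm
  refine ⟨?_, ?_, ?_⟩
  · intro a haL b hbL hac hbc
    exact TwoCore.part1_main hT huv huniq H H' hL hmin haL hbL hac hbc
  · intro x hx
    exact TwoCore.part2_main hT huv huniq H H' hL hmin x hx
  · intro x hx
    exact TwoCore.part2_main hT (Ne.symm huv) huniq' H' H hL hmin x hx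
end

section
/- Let T be a tree, let L be a landmark set of T, and let v be a regular core of T such that the subset of vertices of L lying on the g-legs of v is a local set for v that is not thrifty. Then L is not minimal with respect to set inclusion, i.e., some proper subset of L is also a landmark set of T. -/
open SimpleGraph

variable {V : Type*} [Fintype V] [DecidableEq V]

set_option linter.unusedSectionVars false
set_option linter.unusedVariables false
set_option maxHeartbeats 1000000

namespace LMAux

variable {T : SimpleGraph V} [DecidableRel T.Adj]

lemma dist_eq_zero (hT : T.IsTree) {a b : V} (h : T.dist a b = 0) : a = b :=
  (hT.isConnected.dist_eq_zero_iff).mp h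

lemma tri (hT : T.IsTree) (a b c : V) : T.dist a c ≤ T.dist a b + T.dist b c :=
  hT.isConnected.dist_triangle

lemma exists_geodesic (hT : T.IsTree) (u v : V) :
    ∃ p : T.Walk u v, p.IsPath ∧ p.length = T.dist u v := by
  obtain ⟨p, hp⟩ := hT.isConnected.exists_walk_length_eq_dist u v
  refine ⟨p.toPath, p.toPath.2, le_antisymm ?_ (T.dist_le _)⟩
  calc (p.toPath : T.Walk u v).length ≤ p.length := Walk.length_bypass_le p
    _ = T.dist u v := hp

lemma support_dist_le (hT : T.IsTree) {u v : V} (p : T.Walk u v) {s : V}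
    (hs : s ∈ p.support) : T.dist u s + T.dist s v ≤ p.length := by
  have h1 : T.dist u s ≤ (p.takeUntil s hs).length := T.dist_le _
  have h2 : T.dist s v ≤ (p.dropUntil s hs).length := T.dist_le _
  have h3 := congr_arg Walk.length (p.take_spec hs)
  rw [Walk.length_append] at h3
  omega

lemma concat_isPath {u v w : V} {p : T.Walk u v} (hp : p.IsPath) (h : T.Adj v w)
    (hw : w ∉ p.support) : (p.concat h).IsPath := by
  rw [← Walk.isPath_reverse_iff, Walk.reverse_concat]
  exact Walk.IsPath.cons hp.reverse (by simpa using hw)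

lemma adj_dist_ne (hT : T.IsTree) (r : V) {a b : V} (h : T.Adj a b) :
    T.dist r a ≠ T.dist r b := by
  intro he
  obtain ⟨pa, hpa, hla⟩ := exists_geodesic hT r a
  obtain ⟨pb, hpb, hlb⟩ := exists_geodesic hT r b
  have hb : b ∉ pa.support := by
    intro hmem
    have h1 := support_dist_le hT pa hmem
    have hdba : T.dist b a = 1 := dist_eq_one_iff_adj.mpr h.symm
    omega
  have hpath := concat_isPath hpa h hb
  have := (hT.existsUnique_path r b).unique hpath hpb
  have hlen := congr_arg Walk.length this
  rw [Walk.length_concat] at hlen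
  omega

lemma adj_dist_le (hT : T.IsTree) (r : V) {a b : V} (h : T.Adj a b) :
    T.dist r b ≤ T.dist r a + 1 := by
  have := tri hT r a b
  rw [dist_eq_one_iff_adj.mpr h] at this
  exact this

lemma adj_dist_cases (hT : T.IsTree) (r : V) {a b : V} (h : T.Adj a b) :
    T.dist r b = T.dist r a + 1 ∨ T.dist r a = T.dist r b + 1 := by
  have h1 := adj_dist_le hT r h
  have h2 := adj_dist_le hT r h.symm
  have h3 := adj_dist_ne hT r h
  omega

lemma parent_exists (hT : T.IsTree) {r u : V} {n : ℕ} (h : T.dist r u = n + 1) :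
    ∃ z : V, T.Adj z u ∧ T.dist r z = n := by
  obtain ⟨p, hp, hl⟩ := exists_geodesic hT r u
  set z := p.getVert n with hz
  have hadj : T.Adj z u := by
    have := p.adj_getVert_succ (i := n) (by omega)
    rw [show n + 1 = p.length by omega, p.getVert_length] at this
    exact this
  have hzu : z ≠ u := fun he => T.irrefl (he ▸ hadj)
  have hzs : z ∈ p.support := Walk.mem_support_iff_exists_getVert.mpr ⟨n, rfl, by omega⟩
  have h1 := support_dist_le hT p hzs
  have h2 : T.dist z u = 1 := dist_eq_one_iff_adj.mpr hadj
  have h3 : T.dist r u ≤ T.dist r z + T.dist z u := tri hT r z u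
  exact ⟨z, hadj, by omega⟩

lemma parent_unique (hT : T.IsTree) {r u z₁ z₂ : V} {n : ℕ}
    (h : T.dist r u = n + 1)
    (h1 : T.Adj z₁ u) (hd1 : T.dist r z₁ = n)
    (h2 : T.Adj z₂ u) (hd2 : T.dist r z₂ = n) : z₁ = z₂ := by
  obtain ⟨p1, hp1, hl1⟩ := exists_geodesic hT r z₁
  obtain ⟨p2, hp2, hl2⟩ := exists_geodesic hT r z₂
  have hu1 : u ∉ p1.support := by
    intro hmem
    have := support_dist_le hT p1 hmem
    have : T.dist r u ≤ n := by omega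
    omega
  have hu2 : u ∉ p2.support := by
    intro hmem
    have := support_dist_le hT p2 hmem
    have : T.dist r u ≤ n := by omega
    omega
  have hq1 := concat_isPath hp1 h1 hu1
  have hq2 := concat_isPath hp2 h2 hu2
  have heq := (hT.existsUnique_path r u).unique hq1 hq2
  have := congr_arg (fun w : T.Walk r u => w.reverse.getVert 1) heq
  simpa [Walk.reverse_concat, Walk.getVert_cons_succ] using this

lemma dist_parity (hT : T.IsTree) (a b c : V) :
    (T.dist a b + T.dist b c + T.dist a c) % 2 = 0 := by
  set n := T.dist b c with hn
  clear_value n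
  induction n generalizing c with
  | zero => have : b = c := dist_eq_zero hT hn.symm; subst this; omega
  | succ m ih =>
    obtain ⟨z, hadj, hdz⟩ := parent_exists hT hn.symm
    have h1 := ih z hdz.symm
    have h2 := adj_dist_cases hT a hadj
    omega


/-! ### Branch lemmas -/

lemma mem_branch_self {v x : V} (h : T.Adj v x) : x ∈ Branch T v x := by
  simp only [Branch, Set.mem_setOf_eq, SimpleGraph.dist_self]
  exact dist_eq_one_iff_adj.mpr h

lemma not_mem_branch_self (v x : V) : v ∉ Branch T v x := by
  simp [Branch, SimpleGraph.dist_self]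

lemma branch_pos {v x w : V} (hw : w ∈ Branch T v x) : 1 ≤ T.dist v w := by
  have := hw; simp only [Branch, Set.mem_setOf_eq] at this; omega

lemma dist_x_of_mem (hT : T.IsTree) {v x w : V} (hw : w ∈ Branch T v x) :
    T.dist x w = T.dist v w - 1 := by
  have := hw; simp only [Branch, Set.mem_setOf_eq] at this; omega

lemma dcomm (a b : V) : T.dist a b = T.dist b a := SimpleGraph.dist_comm

lemma dist_x_of_not_mem (hT : T.IsTree) {v x : V} (h : T.Adj v x) {w : V}
    (hw : w ∉ Branch T v x) : T.dist x w = T.dist v w + 1 := by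
  have hcases := adj_dist_cases hT w h
  simp only [Branch, Set.mem_setOf_eq] at hw
  rw [dcomm w x, dcomm w v] at hcases
  omega

/-- In a walk from inside a branch to outside, there is a crossing edge. -/
lemma exists_crossing (hT : T.IsTree) {v x : V} {w u : V} (p : T.Walk w u)
    (hw : w ∈ Branch T v x) (hu : u ∉ Branch T v x) :
    ∃ s t, T.Adj s t ∧ s ∈ Branch T v x ∧ t ∉ Branch T v x ∧ t ∈ p.support := by
  induction p with
  | nil => exact absurd hw hu
  | @cons a b c hab q ih =>
    by_cases hb : b ∈ Branch T v x
    · obtain ⟨s, t, h1, h2, h3, h4⟩ := ih hb hu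
      exact ⟨s, t, h1, h2, h3, by simp [h4]⟩
    · exact ⟨a, b, hab, hw, hb, by simp⟩

/-- A crossing edge of a branch must be the edge (x, v). -/
lemma crossing_eq (hT : T.IsTree) {v x : V} (hvx : T.Adj v x) {s t : V}
    (hst : T.Adj s t) (hs : s ∈ Branch T v x) (ht : t ∉ Branch T v x) : t = v := by
  have hs' : T.dist v s = T.dist x s + 1 := hs
  have ht' : T.dist x t = T.dist v t + 1 := dist_x_of_not_mem hT hvx ht
  have hv := adj_dist_cases hT v hst
  have hx := adj_dist_cases hT x hst
  have hvs : T.dist v s = T.dist v t + 1 := by omega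
  by_contra htv
  have hdvt : 1 ≤ T.dist v t := by
    rcases Nat.eq_zero_or_pos (T.dist v t) with h0 | h1
    · exact absurd (dist_eq_zero hT h0).symm htv
    · exact h1
  -- unique path from v to s via t, and via x
  obtain ⟨q, hq, hql⟩ := exists_geodesic hT v t
  obtain ⟨g, hg, hgl⟩ := exists_geodesic hT x s
  have hsnotq : s ∉ q.support := by
    intro hmem
    have h1 := support_dist_le hT q hmem
    have h2 : T.dist s t = 1 := dist_eq_one_iff_adj.mpr hst
    rw [dcomm s t] at h2
    omega
  have hvnotg : v ∉ g.support := by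
    intro hmem
    have h1 := support_dist_le hT g hmem
    have h2 : T.dist x v = 1 := dist_eq_one_iff_adj.mpr hvx.symm
    have h3 : T.dist x s = T.dist v s - 1 := by omega
    omega
  have hP2 : (q.concat hst.symm).IsPath := concat_isPath hq hst.symm hsnotq
  have hP3 : (Walk.cons hvx g).IsPath := Walk.IsPath.cons hg hvnotg
  have heq := (hT.existsUnique_path v s).unique hP2 hP3
  have hgv : (q.concat hst.symm).getVert 1 = x := by
    rw [heq]; exact (Walk.getVert_cons_succ g hvx).trans g.getVert_zero
  rw [Walk.concat_eq_append, Walk.getVert_append] at hgv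
  have hqlen : 1 ≤ q.length := by rw [hql]; omega
  rcases Nat.lt_or_ge 1 q.length with hlt | hge
  · rw [if_pos hlt] at hgv
    have hxq : x ∈ q.support := Walk.mem_support_iff_exists_getVert.mpr ⟨1, hgv, by omega⟩
    have h1 := support_dist_le hT q hxq
    have h2 : T.dist v x = 1 := dist_eq_one_iff_adj.mpr hvx
    omega
  · have hql1 : q.length = 1 := by omega
    rw [if_neg (by omega), hql1] at hgv
    simp only [Nat.sub_self] at hgv
    have ht_eq : t = x := by simpa [Walk.getVert_zero] using hgv
    exact ht (by rw [ht_eq]; exact mem_branch_self hvx)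

/-- Crossing lemma: distances from inside a branch to outside go through `v`. -/
lemma cross (hT : T.IsTree) {v x : V} (hvx : T.Adj v x) {w u : V}
    (hw : w ∈ Branch T v x) (hu : u ∉ Branch T v x) :
    T.dist w u = T.dist w v + T.dist v u := by
  obtain ⟨p, hp, hl⟩ := exists_geodesic hT w u
  obtain ⟨s, t, h1, h2, h3, h4⟩ := exists_crossing hT p hw hu
  have htv : t = v := crossing_eq hT hvx h1 h2 h3
  rw [htv] at h4
  have h5 := support_dist_le hT p h4
  have h6 := tri hT w v u
  omega


/-! ### More branch lemmas -/

lemma neighbor_in_branch (hT : T.IsTree) {v x : V} (hvx : T.Adj v x) {w z : V}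
    (hw : w ∈ Branch T v x) (hz : T.Adj z w) (hzv : z ≠ v) : z ∈ Branch T v x := by
  by_contra h
  have hc := cross hT hvx hw h
  have h1 : T.dist w z = 1 := dist_eq_one_iff_adj.mpr hz.symm
  have h2 : 1 ≤ T.dist v w := branch_pos hw
  have h3 : T.dist v z ≠ 0 := fun h0 => hzv (dist_eq_zero hT h0).symm
  rw [dcomm w v] at hc
  omega

lemma pos_one_eq (hT : T.IsTree) {v x w : V} (hw : w ∈ Branch T v x)
    (h1 : T.dist v w = 1) : w = x := by
  have := hw
  simp only [Branch, Set.mem_setOf_eq, h1] at this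
  exact (dist_eq_zero hT (by omega)).symm

lemma branch_disjoint (hT : T.IsTree) {v x y : V} (hx : T.Adj v x) (hy : T.Adj v y)
    (hxy : x ≠ y) {w : V} (hwx : w ∈ Branch T v x) (hwy : w ∈ Branch T v y) : False := by
  by_cases hxin : x ∈ Branch T v y
  · have : T.dist v x = T.dist y x + 1 := hxin
    have h1 : T.dist v x = 1 := dist_eq_one_iff_adj.mpr hx
    exact hxy ((dist_eq_zero hT (by omega)).symm) |>.elim
  · have hc := cross hT hy hwy hxin
    have h1 : T.dist x w = T.dist v w - 1 := dist_x_of_mem hT hwx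
    have h2 : T.dist v x = 1 := dist_eq_one_iff_adj.mpr hx
    have h3 : 1 ≤ T.dist v w := branch_pos hwx
    rw [dcomm w x, dcomm w v] at hc
    omega

/-- Each vertex has at least `degree - 1` "children" w.r.t. a root `r`. -/
lemma children_card (hT : T.IsTree) (r c : V) :
    T.degree c - 1 ≤ ((T.neighborFinset c).filter
      (fun z => T.dist r z = T.dist r c + 1)).card := by
  classical
  have hsplit := Finset.card_filter_add_card_filter_not
    (s := T.neighborFinset c) (p := fun z => T.dist r z = T.dist r c + 1)
  have hone : ((T.neighborFinset c).filter (fun z => ¬ T.dist r z = T.dist r c + 1)).card ≤ 1 := by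
    apply Finset.card_le_one.mpr
    intro z1 h1 z2 h2
    simp only [Finset.mem_filter, mem_neighborFinset] at h1 h2
    have hz1 : T.dist r z1 = T.dist r c - 1 := by
      have := adj_dist_cases hT r h1.1; omega
    have hz2 : T.dist r z2 = T.dist r c - 1 := by
      have := adj_dist_cases hT r h2.1; omega
    have hpos : 1 ≤ T.dist r c := by
      have := adj_dist_cases hT r h1.1; omega
    exact parent_unique hT (r := r) (u := c) (n := T.dist r c - 1)
      (by omega) h1.1.symm hz1 h2.1.symm hz2
  have hdeg : T.degree c = (T.neighborFinset c).card := rfl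
  omega

lemma two_children (hT : T.IsTree) {r c : V} (hc : IsCore T c) :
    ∃ c₁ c₂, c₁ ≠ c₂ ∧ T.Adj c c₁ ∧ T.Adj c c₂ ∧
      T.dist r c₁ = T.dist r c + 1 ∧ T.dist r c₂ = T.dist r c + 1 := by
  classical
  have h := children_card hT r c
  have hc' : 3 ≤ T.degree c := hc
  have h2 : 1 < ((T.neighborFinset c).filter
      (fun z => T.dist r z = T.dist r c + 1)).card := by omega
  obtain ⟨c₁, hc1, c₂, hc2, hne⟩ := Finset.one_lt_card.mp h2
  simp only [Finset.mem_filter, mem_neighborFinset] at hc1 hc2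
  exact ⟨c₁, c₂, hne, hc1.1, hc2.1, hc1.2, hc2.2⟩

lemma dist_two_of_children (hT : T.IsTree) {c c₁ c₂ : V} (h1 : T.Adj c c₁)
    (h2 : T.Adj c c₂) (hne : c₁ ≠ c₂) : T.dist c₁ c₂ = 2 := by
  have ha : T.dist c₁ c₂ ≤ 2 := by
    have := tri hT c₁ c c₂
    rw [dcomm c₁ c, dist_eq_one_iff_adj.mpr h1, dist_eq_one_iff_adj.mpr h2] at *
    omega
  have hb : T.dist c₁ c₂ ≠ 0 := fun h0 => hne (dist_eq_zero hT h0)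
  have hcadj : T.dist c₁ c₂ ≠ 1 := by
    intro h1'
    have hadj : T.Adj c₁ c₂ := dist_eq_one_iff_adj.mp h1'
    have := adj_dist_ne hT c hadj
    rw [dist_eq_one_iff_adj.mpr h1, dist_eq_one_iff_adj.mpr h2] at this
    exact this rfl
  omega

/-- children of a branch member are in the branch -/
lemma child_in_branch (hT : T.IsTree) {v x : V} (hvx : T.Adj v x) {c c' : V}
    (hc : c ∈ Branch T v x) (hadj : T.Adj c c') (hd : T.dist v c' = T.dist v c + 1) :
    c' ∈ Branch T v x := by
  refine neighbor_in_branch hT hvx hc hadj.symm ?_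
  intro h
  subst h
  rw [SimpleGraph.dist_self] at hd
  have := branch_pos hc
  omega

/-! ### Standard leg structure -/

lemma std_pos_unique (hT : T.IsTree) {v x : V} (hstd : IsStandardLeg T v x) :
    ∀ n {w z : V}, w ∈ Branch T v x → z ∈ Branch T v x →
      T.dist v w = n → T.dist v z = n → w = z := by
  intro n
  induction n using Nat.strong_induction_on with
  | _ n ih =>
  intro w z hw hz hdw hdz
  rcases n with _ | n
  · exact absurd hdw (by have := branch_pos hw; omega)
  rcases n with _ | m
  · rw [pos_one_eq hT hw hdw, pos_one_eq hT hz hdz]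
  · obtain ⟨pw, hpw, hdpw⟩ := parent_exists hT hdw
    obtain ⟨pz, hpz, hdpz⟩ := parent_exists hT hdz
    have hpwb : pw ∈ Branch T v x := by
      refine neighbor_in_branch hT hstd.1 hw hpw ?_
      intro h; rw [h, SimpleGraph.dist_self] at hdpw; omega
    have hpzb : pz ∈ Branch T v x := by
      refine neighbor_in_branch hT hstd.1 hz hpz ?_
      intro h; rw [h, SimpleGraph.dist_self] at hdpz; omega
    have hpe : pw = pz := ih (m+1) (by omega) hpwb hpzb hdpw hdpz
    subst hpe
    by_contra hne
    -- pw has three distinct neighbors: w, z, and its own parent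
    obtain ⟨g, hg, hdg⟩ := parent_exists hT hdpw
    have hgne1 : g ≠ w := by intro h; rw [h] at hdg; omega
    have hgne2 : g ≠ z := by intro h; rw [h] at hdg; omega
    have hsub : {w, z, g} ⊆ T.neighborFinset pw := by
      intro t ht
      rw [SimpleGraph.mem_neighborFinset]
      simp only [Finset.mem_insert, Finset.mem_singleton] at ht
      rcases ht with rfl | rfl | rfl
      · exact hpw
      · exact hpz
      · exact hg.symm
    have hcard : 3 ≤ T.degree pw := by
      have h3 : ({w, z, g} : Finset V).card = 3 := by
        rw [Finset.card_insert_of_notMem (by simp [hne, Ne.symm hgne1]),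
          Finset.card_insert_of_notMem (by simp [Ne.symm hgne2]),
          Finset.card_singleton]
      calc 3 = ({w, z, g} : Finset V).card := h3.symm
        _ ≤ (T.neighborFinset pw).card := Finset.card_le_card hsub
    exact absurd (hstd.2 pw hpwb) (by omega)

lemma std_chain_dist (hT : T.IsTree) {v x : V} (hstd : IsStandardLeg T v x) :
    ∀ n {w z : V}, w ∈ Branch T v x → z ∈ Branch T v x →
      T.dist v z = n → T.dist v w ≤ n → T.dist w z = n - T.dist v w := by
  intro n
  induction n using Nat.strong_induction_on with
  | _ n ih =>
  intro w z hw hz hdz hle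
  by_cases heq : T.dist v w = n
  · rw [std_pos_unique hT hstd n hw hz heq hdz]
    simp [SimpleGraph.dist_self]; omega
  · have hn2 : 2 ≤ n := by have := branch_pos hw; have := branch_pos hz; omega
    obtain ⟨m, rfl⟩ : ∃ m, n = m + 1 := ⟨n - 1, by omega⟩
    obtain ⟨pz, hpz, hdpz⟩ := parent_exists hT hdz
    have hpzb : pz ∈ Branch T v x := by
      refine neighbor_in_branch hT hstd.1 hz hpz ?_
      intro h; rw [h, SimpleGraph.dist_self] at hdpz; omega
    have hIH : T.dist w pz = m - T.dist v w := ih m (by omega) hw hpzb hdpz (by omega)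
    have hub : T.dist w z ≤ m + 1 - T.dist v w := by
      have := tri hT w pz z
      have h1 : T.dist pz z = 1 := dist_eq_one_iff_adj.mpr hpz
      omega
    have hlb : m + 1 - T.dist v w ≤ T.dist w z := by
      have := tri hT v w z
      omega
    omega


/-! ### Modified leg structure -/

section MLeg

variable (hT : T.IsTree) {v x u a b : V}
variable (hvx : T.Adj v x) (hu : u ∈ Branch T v x) (hcoreu : IsCore T u)
variable (hdeg : T.degree u = 3) (hub : T.Adj u b) (hbshort : Branch T u b = {b})
variable (hbpos : T.dist v b = T.dist v u + 1) (hbin : b ∈ Branch T v x)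
variable (huniq : ∀ w ∈ Branch T v x, IsCore T w → w = u)

include hT

lemma b_nbr (hub : T.Adj u b) (hbshort : Branch T u b = {b}) :
    ∀ w, T.Adj b w → w = u := by
  intro w hw
  have h1 : T.dist u b = 1 := dist_eq_one_iff_adj.mpr hub
  have h2 : T.dist b w = 1 := dist_eq_one_iff_adj.mpr hw
  have h3 : T.dist u w ≤ 2 := by have := tri hT u b w; omega
  rcases Nat.lt_or_ge (T.dist u w) 2 with hlt | hge
  · rcases Nat.lt_or_ge (T.dist u w) 1 with hlt0 | hge1
    · exact (dist_eq_zero hT (by omega)).symm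
    · exfalso
      have := adj_dist_ne hT u hw
      omega
  · exfalso
    have h4 : T.dist u w = 2 := by omega
    have hmem : w ∈ Branch T u b := by
      simp only [Branch, Set.mem_setOf_eq]; omega
    rw [hbshort] at hmem
    simp only [Set.mem_singleton_iff] at hmem
    subst hmem
    exact T.irrefl hw

include hvx hu hcoreu hdeg hub hbshort hbpos huniq in
lemma mod_pos_unique :
    ∀ n {w z : V}, w ∈ Branch T v x → w ≠ b → z ∈ Branch T v x → z ≠ b →
      T.dist v w = n → T.dist v z = n → w = z := by
  intro n
  induction n using Nat.strong_induction_on with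
  | _ n ih =>
  intro w z hw hwb hz hzb hdw hdz
  rcases n with _ | n
  · exact absurd hdw (by have := branch_pos hw; omega)
  rcases n with _ | m
  · rw [pos_one_eq hT hw hdw, pos_one_eq hT hz hdz]
  · obtain ⟨pw, hpw, hdpw⟩ := parent_exists hT hdw
    obtain ⟨pz, hpz, hdpz⟩ := parent_exists hT hdz
    have hpwb : pw ∈ Branch T v x := by
      refine neighbor_in_branch hT hvx hw hpw ?_
      intro h; rw [h, SimpleGraph.dist_self] at hdpw; omega
    have hpzb : pz ∈ Branch T v x := by
      refine neighbor_in_branch hT hvx hz hpz ?_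
      intro h; rw [h, SimpleGraph.dist_self] at hdpz; omega
    have hpwnb : pw ≠ b := by
      intro h
      rw [h] at hpw
      have := b_nbr hT hub hbshort w hpw
      rw [h] at hdpw
      rw [this] at hdw
      omega
    have hpznb : pz ≠ b := by
      intro h
      rw [h] at hpz
      have := b_nbr hT hub hbshort z hpz
      rw [h] at hdpz
      rw [this] at hdz
      omega
    have hpe : pw = pz := ih (m+1) (by omega) hpwb hpwnb hpzb hpznb hdpw hdpz
    subst hpe
    by_contra hne
    obtain ⟨g, hg, hdg⟩ := parent_exists hT hdpw
    have hgne1 : g ≠ w := by intro h; rw [h] at hdg; omega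
    have hgne2 : g ≠ z := by intro h; rw [h] at hdg; omega
    -- pw is a core
    have hsub : {w, z, g} ⊆ T.neighborFinset pw := by
      intro t ht
      rw [SimpleGraph.mem_neighborFinset]
      simp only [Finset.mem_insert, Finset.mem_singleton] at ht
      rcases ht with rfl | rfl | rfl
      · exact hpw
      · exact hpz
      · exact hg.symm
    have h3 : ({w, z, g} : Finset V).card = 3 := by
      rw [Finset.card_insert_of_notMem (by simp [hne, Ne.symm hgne1]),
        Finset.card_insert_of_notMem (by simp [Ne.symm hgne2]),
        Finset.card_singleton]
    have hcore : IsCore T pw := by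
      show 3 ≤ T.degree pw
      calc 3 = ({w, z, g} : Finset V).card := h3.symm
        _ ≤ (T.neighborFinset pw).card := Finset.card_le_card hsub
    have hpwu : pw = u := huniq pw hpwb hcore
    rw [hpwu] at hpw hpz hg hdpw
    -- now b is a fourth neighbor
    have hbne1 : b ≠ w := fun h => hwb h.symm
    have hbne2 : b ≠ z := fun h => hzb h.symm
    have hbne3 : b ≠ g := by
      intro h
      rw [← h] at hdg
      omega
    have hsub4 : {w, z, g, b} ⊆ T.neighborFinset u := by
      intro t ht
      rw [SimpleGraph.mem_neighborFinset]
      simp only [Finset.mem_insert, Finset.mem_singleton] at ht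
      rcases ht with rfl | rfl | rfl | rfl
      · exact hpw
      · exact hpz
      · exact hg.symm
      · exact hub
    have h4 : ({w, z, g, b} : Finset V).card = 4 := by
      rw [Finset.card_insert_of_notMem (by simp [hne, Ne.symm hgne1, Ne.symm hbne1]),
        Finset.card_insert_of_notMem (by simp [Ne.symm hgne2, Ne.symm hbne2]),
        Finset.card_insert_of_notMem (by simp [Ne.symm hbne3]),
        Finset.card_singleton]
    have : 4 ≤ T.degree u := by
      calc 4 = ({w, z, g, b} : Finset V).card := h4.symm
        _ ≤ (T.neighborFinset u).card := Finset.card_le_card hsub4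
    omega

include hvx hu hcoreu hdeg hub hbshort hbpos huniq in
lemma mod_chain_dist :
    ∀ n {w z : V}, w ∈ Branch T v x → w ≠ b → z ∈ Branch T v x → z ≠ b →
      T.dist v z = n → T.dist v w ≤ n → T.dist w z = n - T.dist v w := by
  intro n
  induction n using Nat.strong_induction_on with
  | _ n ih =>
  intro w z hw hwb hz hzb hdz hle
  by_cases heq : T.dist v w = n
  · rw [mod_pos_unique hT hvx hu hcoreu hdeg hub hbshort hbpos huniq n hw hwb hz hzb heq hdz]
    rw [SimpleGraph.dist_self]; omega
  · have hn2 : 2 ≤ n := by have := branch_pos hw; have := branch_pos hz; omega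
    obtain ⟨m, rfl⟩ : ∃ m, n = m + 1 := ⟨n - 1, by omega⟩
    obtain ⟨pz, hpz, hdpz⟩ := parent_exists hT hdz
    have hpzb : pz ∈ Branch T v x := by
      refine neighbor_in_branch hT hvx hz hpz ?_
      intro h; rw [h, SimpleGraph.dist_self] at hdpz; omega
    have hpznb : pz ≠ b := by
      intro h
      rw [h] at hpz
      have := b_nbr hT hub hbshort z hpz
      rw [h] at hdpz
      rw [this] at hdz
      omega
    have hIH : T.dist w pz = m - T.dist v w :=
      ih m (by omega) hw hwb hpzb hpznb hdpz (by omega)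
    have hub' : T.dist w z ≤ m + 1 - T.dist v w := by
      have := tri hT w pz z
      have h1 : T.dist pz z = 1 := dist_eq_one_iff_adj.mpr hpz
      omega
    have hlb : m + 1 - T.dist v w ≤ T.dist w z := by
      have := tri hT v w z
      omega
    omega

variable (hab : a ≠ b) (ha : a ∈ Branch T v x) (hapos : T.dist v a = T.dist v u + 1)

include hvx hu hcoreu hdeg hub hbshort hbpos huniq in
lemma chain_ne_b {w : V} (hw : w ∈ Branch T v x) (hwpos : T.dist v w ≠ T.dist v u + 1) :
    w ≠ b := by
  intro h; rw [h] at hwpos; exact hwpos hbpos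

include hvx hu hcoreu hdeg hub hbshort hbpos huniq hab ha hapos in
lemma adj_u_a : T.Adj u a := by
  have hi : 1 ≤ T.dist v u := branch_pos hu
  obtain ⟨pa, hpa, hdpa⟩ := parent_exists hT (show T.dist v a = (T.dist v u - 1) + 1 + 1 by omega)
  have hpab : pa ∈ Branch T v x := by
    refine neighbor_in_branch hT hvx ha hpa ?_
    intro h; rw [h, SimpleGraph.dist_self] at hdpa; omega
  have hpanb : pa ≠ b := by
    intro h
    rw [h] at hpa
    have := b_nbr hT hub hbshort a hpa
    rw [this] at hapos
    omega
  have hunb : u ≠ b := by intro h; rw [h] at hbpos; omega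
  have : pa = u := mod_pos_unique hT hvx hu hcoreu hdeg hub hbshort hbpos huniq
    (T.dist v u) hpab hpanb hu hunb (by omega) rfl
  rw [this] at hpa
  exact hpa

include hub hbshort in
lemma dist_b_of_ne {w : V} (hw : w ≠ b) : T.dist w b = T.dist w u + 1 := by
  have hwn : w ∉ Branch T u b := by rw [hbshort]; simpa using hw
  have := cross hT hub (mem_branch_self hub) hwn
  have h1 : T.dist b u = 1 := by rw [dcomm]; exact dist_eq_one_iff_adj.mpr hub
  rw [dcomm w b, dcomm w u, dcomm u w] at *
  omega

include hvx hu hcoreu hdeg hub hbshort hbpos huniq hab ha hapos in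
lemma mleg_N1 {t : V} (ht : t ∈ Branch T v x) (htpos : T.dist v u + 2 ≤ T.dist v t) :
    T.dist t b = T.dist t a + 2 := by
  have hi : 1 ≤ T.dist v u := branch_pos hu
  have htb : t ≠ b := chain_ne_b hT hvx hu hcoreu hdeg hub hbshort hbpos huniq ht (by omega)
  have hunb : u ≠ b := by intro h; rw [h] at hbpos; omega
  have hanb : a ≠ b := hab
  have h1 : T.dist u t = T.dist v t - T.dist v u :=
    mod_chain_dist hT hvx hu hcoreu hdeg hub hbshort hbpos huniq
      (T.dist v t) hu hunb ht htb rfl (by omega)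
  have h2 : T.dist a t = T.dist v t - (T.dist v u + 1) :=
    mod_chain_dist hT hvx hu hcoreu hdeg hub hbshort hbpos huniq
      (T.dist v t) ha hanb ht htb rfl (by omega) |>.trans (by rw [hapos])
  have h3 : T.dist t b = T.dist t u + 1 := dist_b_of_ne hT hub hbshort htb
  rw [dcomm t a, dcomm t u] at *
  omega

include hvx hu hcoreu hdeg hub hbshort hbpos huniq hab ha hapos in
lemma mleg_N2low {t : V} (ht : t ∈ Branch T v x) (htpos : T.dist v t ≤ T.dist v u) :
    T.dist t a = T.dist t b := by
  have hi : 1 ≤ T.dist v u := branch_pos hu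
  have htb : t ≠ b := chain_ne_b hT hvx hu hcoreu hdeg hub hbshort hbpos huniq ht (by omega)
  have hunb : u ≠ b := by intro h; rw [h] at hbpos; omega
  have h1 : T.dist t u = T.dist v u - T.dist v t :=
    mod_chain_dist hT hvx hu hcoreu hdeg hub hbshort hbpos huniq
      (T.dist v u) ht htb hu hunb rfl htpos
  have h3 : T.dist t b = T.dist t u + 1 := dist_b_of_ne hT hub hbshort htb
  have hua : T.Adj u a := adj_u_a hT hvx hu hcoreu hdeg hub hbshort hbpos huniq hab ha hapos
  have h4 : T.dist t a ≤ T.dist t u + 1 := by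
    have := tri hT t u a
    have : T.dist u a = 1 := dist_eq_one_iff_adj.mpr hua
    omega
  have h5 : T.dist v a ≤ T.dist v t + T.dist t a := tri hT v t a
  omega

include hvx hu hcoreu hdeg hub hbshort hbpos hbin huniq hab ha hapos in
lemma mleg_N2out {t : V} (ht : t ∉ Branch T v x) : T.dist t a = T.dist t b := by
  have h1 := cross hT hvx ha ht
  have h2 := cross hT hvx hbin ht
  rw [dcomm a v] at h1
  rw [dcomm b v] at h2
  rw [dcomm t a, dcomm t b]
  omega

include hvx hu hcoreu hdeg hub hbshort hbpos huniq hab ha hapos in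
lemma mleg_N3 {w z : V} (hw : w ∈ Branch T v x) (hz : z ∈ Branch T v x) (hne : w ≠ z)
    (heq : T.dist v w = T.dist v z) : (w = a ∧ z = b) ∨ (w = b ∧ z = a) := by
  by_cases hwb : w = b
  · right
    refine ⟨hwb, ?_⟩
    have hznb : z ≠ b := fun h => hne (hwb.trans h.symm)
    refine mod_pos_unique hT hvx hu hcoreu hdeg hub hbshort hbpos huniq
      (T.dist v u + 1) hz hznb ha hab ?_ hapos
    rw [← heq, hwb, hbpos]
  · by_cases hzb : z = b
    · left
      refine ⟨?_, hzb⟩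
      refine mod_pos_unique hT hvx hu hcoreu hdeg hub hbshort hbpos huniq
        (T.dist v u + 1) hw hwb ha hab ?_ hapos
      rw [heq, hzb, hbpos]
    · exact absurd (mod_pos_unique hT hvx hu hcoreu hdeg hub hbshort hbpos huniq
        (T.dist v w) hw hwb hz hzb rfl heq.symm) hne

end MLeg


/-! ### Landmarks in branches -/

/-- Any separator of an equal-position pair inside a branch lies in the branch. -/
lemma separator_in_branch (hT : T.IsTree) {v y : V} (hvy : T.Adj v y) {w₁ w₂ τ : V}
    (h1 : w₁ ∈ Branch T v y) (h2 : w₂ ∈ Branch T v y)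
    (heq : T.dist v w₁ = T.dist v w₂) (hsep : Separates T τ w₁ w₂) :
    τ ∈ Branch T v y := by
  by_contra h
  apply hsep
  have c1 := cross hT hvy h1 h
  have c2 := cross hT hvy h2 h
  rw [dcomm w₁ v] at c1
  rw [dcomm w₂ v] at c2
  rw [dcomm τ w₁, dcomm τ w₂]
  omega

/-- An equal-position pair inside a branch yields landmarks in the branch. -/
lemma equalpos_landmarks (hT : T.IsTree) {L : Set V} (hL : IsLandmarkSet T L)
    {v y : V} (hvy : T.Adj v y) {w₁ w₂ : V}
    (h1 : w₁ ∈ Branch T v y) (h2 : w₂ ∈ Branch T v y) (hne : w₁ ≠ w₂)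
    (heq : T.dist v w₁ = T.dist v w₂) :
    (w₁ ∈ L ∧ w₁ ∈ Branch T v y) ∨ (w₂ ∈ L ∧ w₂ ∈ Branch T v y) ∨
      (∃ τ₁ ∈ L ∩ Branch T v y, ∃ τ₂ ∈ L ∩ Branch T v y, τ₁ ≠ τ₂) := by
  by_cases hw1 : w₁ ∈ L
  · exact Or.inl ⟨hw1, h1⟩
  by_cases hw2 : w₂ ∈ L
  · exact Or.inr (Or.inl ⟨hw2, h2⟩)
  obtain ⟨τ₁, hτ₁, τ₂, hτ₂, hτne, hs1, hs2⟩ := hL w₁ w₂ hne hw1 hw2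
  exact Or.inr (Or.inr ⟨τ₁, ⟨hτ₁, separator_in_branch hT hvy h1 h2 heq hs1⟩,
    τ₂, ⟨hτ₂, separator_in_branch hT hvy h1 h2 heq hs2⟩, hτne⟩)

/-- A branch containing a core contains a landmark. -/
lemma core_branch_landmark (hT : T.IsTree) {L : Set V} (hL : IsLandmarkSet T L)
    {v y : V} (hvy : T.Adj v y) {c : V} (hc : c ∈ Branch T v y) (hcore : IsCore T c) :
    ∃ τ ∈ L, τ ∈ Branch T v y := by
  obtain ⟨c₁, c₂, hne, ha1, ha2, hd1, hd2⟩ := two_children hT (r := v) hcore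
  have hb1 : c₁ ∈ Branch T v y := child_in_branch hT hvy hc ha1 hd1
  have hb2 : c₂ ∈ Branch T v y := child_in_branch hT hvy hc ha2 hd2
  rcases equalpos_landmarks hT hL hvy hb1 hb2 hne (hd1.trans hd2.symm) with
    ⟨h, hb⟩ | ⟨h, hb⟩ | ⟨τ, ⟨hτL, hτB⟩, _⟩
  · exact ⟨c₁, h, hb⟩
  · exact ⟨c₂, h, hb⟩
  · exact ⟨τ, hτL, hτB⟩

lemma mem_branch_through (hT : T.IsTree) {v y c w : V} (hvy : T.Adj v y)
    (hc : c ∈ Branch T v y) (h : T.dist v w = T.dist v c + T.dist c w) :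
    w ∈ Branch T v y := by
  have h1 : T.dist y c = T.dist v c - 1 := dist_x_of_mem hT hc
  have h2 : T.dist y w ≤ T.dist y c + T.dist c w := tri hT y c w
  have h3 : T.dist v w ≤ T.dist v y + T.dist y w := tri hT v y w
  have h4 : T.dist v y = 1 := dist_eq_one_iff_adj.mpr hvy
  have h5 : 1 ≤ T.dist v c := branch_pos hc
  show T.dist v w = T.dist y w + 1
  omega

/-- From a non-short leg of `c` hanging below child `c₁`, get a vertex at depth 2. -/
lemma grandchild (hT : T.IsTree) {v y c c₁ : V} (hvy : T.Adj v y)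
    (hc : c ∈ Branch T v y) (hadj : T.Adj c c₁) (hd : T.dist v c₁ = T.dist v c + 1)
    (hns : Branch T c c₁ ≠ {c₁}) :
    ∃ s, s ∈ Branch T v y ∧ T.dist v s = T.dist v c + 2 ∧ s ∈ Branch T c c₁ := by
  have hc1 : c₁ ∈ Branch T c c₁ := mem_branch_self hadj
  obtain ⟨w, hw, hwne⟩ : ∃ w, w ∈ Branch T c c₁ ∧ w ≠ c₁ := by
    by_contra h
    push_neg at h
    apply hns
    apply Set.eq_singleton_iff_unique_mem.mpr
    exact ⟨hc1, fun w hw => h w hw⟩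
  have hdc1w : 1 ≤ T.dist c₁ w := by
    have : T.dist c₁ w ≠ 0 := fun h0 => hwne (dist_eq_zero hT h0).symm
    omega
  have hwmem : T.dist c w = T.dist c₁ w + 1 := hw
  obtain ⟨p, hp, hl⟩ := exists_geodesic hT c₁ w
  set s := p.getVert 1 with hs
  have hadj1 : T.Adj c₁ s := by
    have := p.adj_getVert_succ (i := 0) (by omega)
    simpa [Walk.getVert_zero] using this
  have hsmem : s ∈ p.support := Walk.mem_support_iff_exists_getVert.mpr ⟨1, rfl, by omega⟩
  have hsnc : s ≠ c := by
    intro h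
    rw [h] at hsmem
    have := support_dist_le hT p hsmem
    have hcc1 : T.dist c₁ c = 1 := by rw [dcomm]; exact dist_eq_one_iff_adj.mpr hadj
    omega
  have hdcs : T.dist c s = 2 := by
    have hub : T.dist c s ≤ 2 := by
      have := tri hT c c₁ s
      have h1 : T.dist c c₁ = 1 := dist_eq_one_iff_adj.mpr hadj
      have h2 : T.dist c₁ s = 1 := dist_eq_one_iff_adj.mpr hadj1
      omega
    have hne0 : T.dist c s ≠ 0 := fun h0 => hsnc (dist_eq_zero hT h0).symm
    have hne1 : T.dist c s ≠ 1 := by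
      have := adj_dist_ne hT c hadj1
      have h1 : T.dist c c₁ = 1 := dist_eq_one_iff_adj.mpr hadj
      omega
    omega
  have hsb : s ∈ Branch T c c₁ := by
    show T.dist c s = T.dist c₁ s + 1
    rw [hdcs, dist_eq_one_iff_adj.mpr hadj1]
  have hvnb : v ∉ Branch T c c₁ := by
    intro hvb
    have : T.dist c v = T.dist c₁ v + 1 := hvb
    rw [dcomm c v, dcomm c₁ v] at this
    omega
  have hcross := cross hT hadj hsb hvnb
  rw [dcomm c v, dcomm s c] at hcross
  have hdvs : T.dist v s = T.dist v c + 2 := by rw [dcomm v s]; omega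
  exact ⟨s, mem_branch_through hT hvy hc (by rw [hdvs, hdcs]), hdvs, hsb⟩

/-- Two children of distinct cores (w.r.t. root v) are distinct. -/
lemma child_ne_child (hT : T.IsTree) {v c c' k k' : V} (hc : T.Adj c k)
    (hdk : T.dist v k = T.dist v c + 1) (hc' : T.Adj c' k')
    (hdk' : T.dist v k' = T.dist v c' + 1) (hcc : c ≠ c') : k ≠ k' := by
  intro h
  rw [← h] at hc' hdk'
  exact hcc (parent_unique hT (r := v) (u := k) (n := T.dist v c)
    hdk hc (by omega) hc' (by omega))


lemma equalpos_landmark_or (hT : T.IsTree) {L : Set V} (hL : IsLandmarkSet T L)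
    {v y : V} (hvy : T.Adj v y) {w₁ w₂ : V}
    (h1 : w₁ ∈ Branch T v y) (h2 : w₂ ∈ Branch T v y) (hne : w₁ ≠ w₂)
    (heq : T.dist v w₁ = T.dist v w₂) :
    (∃ τ₁ ∈ L ∩ Branch T v y, ∃ τ₂ ∈ L ∩ Branch T v y, τ₁ ≠ τ₂) ∨
      ∃ m, m ∈ L ∩ Branch T v y ∧ (m = w₁ ∨ m = w₂) := by
  rcases equalpos_landmarks hT hL hvy h1 h2 hne heq with ⟨h, hb⟩ | ⟨h, hb⟩ | hdone
  · exact Or.inr ⟨w₁, ⟨h, hb⟩, Or.inl rfl⟩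
  · exact Or.inr ⟨w₂, ⟨h, hb⟩, Or.inr rfl⟩
  · exact Or.inl hdone

/-- A vertex of a child-branch is in the parent branch. -/
lemma childbranch_sub (hT : T.IsTree) {v y c c₁ w : V} (hvy : T.Adj v y)
    (hc : c ∈ Branch T v y) (hadj : T.Adj c c₁) (hd : T.dist v c₁ = T.dist v c + 1)
    (hw : w ∈ Branch T c c₁) : w ∈ Branch T v y ∧ T.dist v w = T.dist v c + T.dist c w := by
  have hvnb : v ∉ Branch T c c₁ := by
    intro hvb
    have h0 : T.dist c v = T.dist c₁ v + 1 := hvb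
    rw [dcomm c v, dcomm c₁ v] at h0
    omega
  have hcross := cross hT hadj hw hvnb
  rw [dcomm c v, dcomm w c] at hcross
  have hdvw : T.dist v w = T.dist v c + T.dist c w := by rw [dcomm v w]; omega
  exact ⟨mem_branch_through hT hvy hc hdvw, hdvw⟩

/-- A branch containing a core that is not a modified leg contains two landmarks. -/
lemma core_branch_two_landmarks (hT : T.IsTree) {L : Set V} (hL : IsLandmarkSet T L)
    {v y : V} (hvy : T.Adj v y) {c : V} (hc : c ∈ Branch T v y) (hcore : IsCore T c)
    (hnm : ¬ IsModifiedLeg T v y) :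
    ∃ τ₁ ∈ L ∩ Branch T v y, ∃ τ₂ ∈ L ∩ Branch T v y, τ₁ ≠ τ₂ := by
  classical
  by_cases hdeg4 : 4 ≤ T.degree c
  · -- three children, pigeonhole
    have hcard := children_card hT v c
    have h3 : 2 < ((T.neighborFinset c).filter
        (fun z => T.dist v z = T.dist v c + 1)).card := by omega
    obtain ⟨e₁, e₂, e₃, he1, he2, he3, h12, h13, h23⟩ := Finset.two_lt_card_iff.mp h3
    simp only [Finset.mem_filter, mem_neighborFinset] at he1 he2 he3
    have hb1 : e₁ ∈ Branch T v y := child_in_branch hT hvy hc he1.1 he1.2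
    have hb2 : e₂ ∈ Branch T v y := child_in_branch hT hvy hc he2.1 he2.2
    have hb3 : e₃ ∈ Branch T v y := child_in_branch hT hvy hc he3.1 he3.2
    rcases equalpos_landmark_or hT hL hvy hb1 hb2 h12 (he1.2.trans he2.2.symm) with hdone | ⟨m₁, hm1, hm1e⟩
    · exact hdone
    rcases equalpos_landmark_or hT hL hvy hb1 hb3 h13 (he1.2.trans he3.2.symm) with hdone | ⟨m₂, hm2, hm2e⟩
    · exact hdone
    rcases equalpos_landmark_or hT hL hvy hb2 hb3 h23 (he2.2.trans he3.2.symm) with hdone | ⟨m₃, hm3, hm3e⟩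
    · exact hdone
    by_cases hmm : m₁ = m₃
    · refine ⟨m₂, hm2, m₁, hm1, ?_⟩
      rcases hm1e with rfl | rfl
      · rcases hm3e with rfl | rfl
        · exact absurd hmm h12
        · exact absurd hmm h13
      · rcases hm2e with rfl | rfl
        · exact h12
        · exact h23.symm
    · exact ⟨m₁, hm1, m₃, hm3, hmm⟩
  · have hdeg3 : T.degree c = 3 := by
      have : 3 ≤ T.degree c := hcore
      omega
    obtain ⟨c₁, c₂, hne, ha1, ha2, hd1, hd2⟩ := two_children hT (r := v) hcore
    have hb1 : c₁ ∈ Branch T v y := child_in_branch hT hvy hc ha1 hd1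
    have hb2 : c₂ ∈ Branch T v y := child_in_branch hT hvy hc ha2 hd2
    rcases equalpos_landmark_or hT hL hvy hb1 hb2 hne (hd1.trans hd2.symm) with hdone | ⟨κ, hκ, hκe⟩
    · exact hdone
    have hκd : T.dist v κ = T.dist v c + 1 := by rcases hκe with rfl | rfl; exacts [hd1, hd2]
    by_cases hc' : ∃ c', c' ∈ Branch T v y ∧ IsCore T c' ∧ c' ≠ c
    · obtain ⟨c', hc'B, hc'core, hc'ne⟩ := hc'
      obtain ⟨e₁, e₂, hene, hea1, hea2, hed1, hed2⟩ := two_children hT (r := v) hc'core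
      have heb1 : e₁ ∈ Branch T v y := child_in_branch hT hvy hc'B hea1 hed1
      have heb2 : e₂ ∈ Branch T v y := child_in_branch hT hvy hc'B hea2 hed2
      rcases equalpos_landmark_or hT hL hvy heb1 heb2 hene (hed1.trans hed2.symm) with hdone | ⟨m, hm, hme⟩
      · exact hdone
      refine ⟨κ, hκ, m, hm, ?_⟩
      have hκadj : T.Adj c κ := by rcases hκe with rfl | rfl; exacts [ha1, ha2]
      rcases hme with rfl | rfl
      · exact child_ne_child hT hκadj hκd hea1 hed1 (fun h => hc'ne h.symm)
      · exact child_ne_child hT hκadj hκd hea2 hed2 (fun h => hc'ne h.symm)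
    · push_neg at hc'
      have huniqcore : ∀ w ∈ Branch T v y, IsCore T w → w = c := fun w hw hwc => hc' w hw hwc
      -- the child legs are standard legs of c
      have hstd : ∀ {k : V}, T.Adj c k → T.dist v k = T.dist v c + 1 → IsStandardLeg T c k := by
        intro k hadj hd
        refine ⟨hadj, fun w hw => ?_⟩
        by_contra hdegw
        have hwcore : IsCore T w := by
          show 3 ≤ T.degree w
          omega
        obtain ⟨hwB, _⟩ := childbranch_sub hT hvy hc hadj hd hw
        have := huniqcore w hwB hwcore
        rw [this] at hw
        have hcc : T.dist c c = T.dist k c + 1 := hw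
        rw [SimpleGraph.dist_self] at hcc
        omega
      have hstd1 := hstd ha1 hd1
      have hstd2 := hstd ha2 hd2
      -- c is not small
      have hnsmall : ¬ IsSmallCore T c := by
        intro hsmall
        exact hnm ⟨hvy, c, hc, hsmall, huniqcore⟩
      have hns1 : Branch T c c₁ ≠ {c₁} := by
        intro h
        exact hnsmall ⟨hdeg3, c₁, c₂, hne, ⟨hstd1, h⟩, hstd2⟩
      have hns2 : Branch T c c₂ ≠ {c₂} := by
        intro h
        exact hnsmall ⟨hdeg3, c₂, c₁, hne.symm, ⟨hstd2, h⟩, hstd1⟩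
      obtain ⟨s₁, hs1B, hs1d, hs1b⟩ := grandchild hT hvy hc ha1 hd1 hns1
      obtain ⟨s₂, hs2B, hs2d, hs2b⟩ := grandchild hT hvy hc ha2 hd2 hns2
      have hsne : s₁ ≠ s₂ := by
        intro h
        rw [h] at hs1b
        exact branch_disjoint hT ha1 ha2 hne hs1b hs2b
      rcases equalpos_landmark_or hT hL hvy hs1B hs2B hsne (hs1d.trans hs2d.symm) with hdone | ⟨m, hm, hme⟩
      · exact hdone
      refine ⟨κ, hκ, m, hm, ?_⟩
      intro h
      have : T.dist v m = T.dist v c + 2 := by rcases hme with rfl | rfl; exacts [hs1d, hs2d]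
      rw [← h, hκd] at this
      omega


/-- There are at least two landmarks outside the branch of `x`. -/
lemma two_outside (hT : T.IsTree) {L : Set V} (hL : IsLandmarkSet T L)
    {v : V} (hv : IsRegularCore T v)
    (hls : IsLocalSet T v (L ∩ GLegVerts T v))
    {x : V} (hvx : T.Adj v x) (hxne : ∃ τ ∈ L, τ ∈ Branch T v x) :
    ∃ τ₁ τ₂ : V, τ₁ ∈ L ∧ τ₂ ∈ L ∧ τ₁ ≠ τ₂ ∧ τ₁ ∉ Branch T v x ∧ τ₂ ∉ Branch T v x := by
  classical
  obtain ⟨hsub, hc1, hc2, hc3, hc4, hc5, hc6⟩ := hls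
  set S := L ∩ GLegVerts T v with hSdef
  have hSL : ∀ {τ}, τ ∈ S → τ ∈ L := fun h => h.1
  set N := (T.neighborFinset v).erase x with hN
  have hNadj : ∀ y ∈ N, T.Adj v y ∧ y ≠ x := by
    intro y hy
    rw [hN, Finset.mem_erase, mem_neighborFinset] at hy
    exact ⟨hy.2, hy.1⟩
  have hNcard : 2 ≤ N.card := by
    have hxm : x ∈ T.neighborFinset v := (mem_neighborFinset T v x).mpr hvx
    have hce := Finset.card_erase_of_mem hxm
    rw [← hN] at hce
    have hdeg : 3 ≤ T.degree v := hv.1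
    have hdeg' : T.degree v = (T.neighborFinset v).card := rfl
    omega
  have hnotx : ∀ {y τ}, y ∈ N → τ ∈ Branch T v y → τ ∉ Branch T v x := by
    intro y τ hy hτ hτx
    exact branch_disjoint hT (hNadj y hy).1 hvx (hNadj y hy).2 hτ hτx
  have hdistinct : ∀ {y₁ y₂ τ₁ τ₂}, y₁ ∈ N → y₂ ∈ N → y₁ ≠ y₂ →
      τ₁ ∈ Branch T v y₁ → τ₂ ∈ Branch T v y₂ → τ₁ ≠ τ₂ := by
    intro y₁ y₂ τ₁ τ₂ h1 h2 hne ht1 ht2 heq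
    rw [heq] at ht1
    exact branch_disjoint hT (hNadj y₁ h1).1 (hNadj y₂ h2).1 hne ht1 ht2
  have hbranchy : ∀ y ∈ N, (∃ τ ∈ L, τ ∈ Branch T v y) ∨
      (IsStandardLeg T v y ∧ SolS0 T v y S) := by
    intro y hy
    by_cases hLy : ∃ τ ∈ L, τ ∈ Branch T v y
    · exact Or.inl hLy
    push_neg at hLy
    right
    have hstd : IsStandardLeg T v y := by
      refine ⟨(hNadj y hy).1, fun w hw => ?_⟩
      by_contra hdw
      have hcore : IsCore T w := by show 3 ≤ T.degree w; omega
      obtain ⟨τ, hτL, hτB⟩ := core_branch_landmark hT hL (hNadj y hy).1 hw hcore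
      exact hLy τ hτL hτB
    refine ⟨hstd, ?_⟩
    rw [SolS0, Set.eq_empty_iff_forall_notMem]
    intro τ hτ
    exact hLy τ (hSL hτ.1) hτ.2
  by_cases hall : ∀ y ∈ N, ∃ τ ∈ L, τ ∈ Branch T v y
  · obtain ⟨y₁, hy1, y₂, hy2, hyne⟩ := Finset.one_lt_card.mp (by omega : 1 < N.card)
    obtain ⟨τ₁, hτ1L, hτ1B⟩ := hall y₁ hy1
    obtain ⟨τ₂, hτ2L, hτ2B⟩ := hall y₂ hy2
    exact ⟨τ₁, τ₂, hτ1L, hτ2L, hdistinct hy1 hy2 hyne hτ1B hτ2B,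
      hnotx hy1 hτ1B, hnotx hy2 hτ2B⟩
  · push_neg at hall
    obtain ⟨y₁, hy1, hy1empty⟩ := hall
    have hstdS0 : IsStandardLeg T v y₁ ∧ SolS0 T v y₁ S := by
      rcases hbranchy y₁ hy1 with ⟨τ, hτL, hτB⟩ | h
      · exact absurd hτB (hy1empty τ hτL)
      · exact h
    obtain ⟨hstd1, hs01⟩ := hstdS0
    -- helper to package two landmarks from a single branch y₂
    have hpack : ∀ {y₂ : V}, y₂ ∈ N →
        (∃ τ₁ ∈ L ∩ Branch T v y₂, ∃ τ₂ ∈ L ∩ Branch T v y₂, τ₁ ≠ τ₂) →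
        ∃ τ₁ τ₂ : V, τ₁ ∈ L ∧ τ₂ ∈ L ∧ τ₁ ≠ τ₂ ∧ τ₁ ∉ Branch T v x ∧ τ₂ ∉ Branch T v x := by
      rintro y₂ hy2 ⟨τ₁, ⟨h1L, h1B⟩, τ₂, ⟨h2L, h2B⟩, hne⟩
      exact ⟨τ₁, τ₂, h1L, h2L, hne, hnotx hy2 h1B, hnotx hy2 h2B⟩
    by_cases hN3 : 3 ≤ N.card
    · have h2 : 1 < (N.erase y₁).card := by
        have := Finset.card_erase_of_mem hy1
        omega
      obtain ⟨y₂, hy2, y₃, hy3, hyne⟩ := Finset.one_lt_card.mp h2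
      have hy2N : y₂ ∈ N := Finset.mem_of_mem_erase hy2
      have hy3N : y₃ ∈ N := Finset.mem_of_mem_erase hy3
      have hy2ne : y₂ ≠ y₁ := Finset.ne_of_mem_erase hy2
      have hy3ne : y₃ ≠ y₁ := Finset.ne_of_mem_erase hy3
      have hfull : ∀ {y : V}, y ∈ N → y ≠ y₁ → ∃ τ ∈ L, τ ∈ Branch T v y := by
        intro y hy hne
        rcases hbranchy y hy with h | ⟨hstd, hs0⟩
        · exact h
        · exact absurd (hc1 y₁ y hstd1 hstd (Ne.symm hne) hs01 hs0) id
      obtain ⟨τ₁, hτ1L, hτ1B⟩ := hfull hy2N hy2ne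
      obtain ⟨τ₂, hτ2L, hτ2B⟩ := hfull hy3N hy3ne
      exact ⟨τ₁, τ₂, hτ1L, hτ2L, hdistinct hy2N hy3N hyne hτ1B hτ2B,
        hnotx hy2N hτ1B, hnotx hy3N hτ2B⟩
    · -- degree v = 3
      have hdeg3 : T.degree v = 3 := by
        have hxm : x ∈ T.neighborFinset v := (mem_neighborFinset T v x).mpr hvx
        have hce := Finset.card_erase_of_mem hxm
        rw [← hN] at hce
        have hdeg : 3 ≤ T.degree v := hv.1
        have hdeg' : T.degree v = (T.neighborFinset v).card := rfl
        omega
      have h1 : (N.erase y₁).card = 1 := by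
        have := Finset.card_erase_of_mem hy1
        omega
      obtain ⟨y₂, hy2eq⟩ := Finset.card_eq_one.mp h1
      have hy2 : y₂ ∈ N.erase y₁ := by rw [hy2eq]; exact Finset.mem_singleton_self y₂
      have hy2N : y₂ ∈ N := Finset.mem_of_mem_erase hy2
      have hy2ne : y₂ ≠ y₁ := Finset.ne_of_mem_erase hy2
      refine hpack hy2N ?_
      by_cases hcore2 : ∃ c ∈ Branch T v y₂, IsCore T c
      · obtain ⟨c, hcB, hccore⟩ := hcore2
        by_cases hmod : IsModifiedLeg T v y₂
        · have hnm1 : ¬ SolM1 T v y₂ S := hc4 ⟨y₁, hstd1, hs01⟩ y₂ hmod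
          rcases hc3 y₂ hmod with hm1 | hm2 | hm3
          · exact absurd hm1 hnm1
          · obtain ⟨u', a', b', hp, hna, hnb, ⟨w₁, hw1, w₂, hw2, hwne, _, _⟩, _⟩ := hm2
            exact ⟨w₁, ⟨hSL hw1.1, hw1.2⟩, w₂, ⟨hSL hw2.1, hw2.2⟩, hwne⟩
          · obtain ⟨u', a', b', hp, ⟨w₁, hw1, w₂, hw2, hwne⟩, _⟩ := hm3
            exact ⟨w₁, ⟨hSL hw1.1, hw1.2⟩, w₂, ⟨hSL hw2.1, hw2.2⟩, hwne⟩
        · exact core_branch_two_landmarks hT hL (hNadj y₂ hy2N).1 hcB hccore hmod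
      · push_neg at hcore2
        have hstd2 : IsStandardLeg T v y₂ := by
          refine ⟨(hNadj y₂ hy2N).1, fun w hw => ?_⟩
          by_contra hdw
          exact (hcore2 w hw) (by show 3 ≤ T.degree w; omega)
        have hlong1 : IsLongLeg T v y₁ := by
          refine ⟨hstd1, fun hshort => ?_⟩
          exact hv.2 ⟨hdeg3, y₁, y₂, Ne.symm hy2ne, ⟨hstd1, hshort⟩, hstd2⟩
        have hlong2 : IsLongLeg T v y₂ := by
          refine ⟨hstd2, fun hshort => ?_⟩
          exact hv.2 ⟨hdeg3, y₂, y₁, hy2ne, ⟨hstd2, hshort⟩, hstd1⟩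
        obtain ⟨w₁, hw1, w₂, hw2, hwne⟩ := hc5 y₁ hlong1 hs01 y₂ hlong2 hy2ne
        exact ⟨w₁, ⟨hSL hw1.1, hw1.2⟩, w₂, ⟨hSL hw2.1, hw2.2⟩, hwne⟩


/-! ### Separation helpers -/

lemma sep_out_out (hT : T.IsTree) {v x : V} (hvx : T.Adj v x) {u w τ : V}
    (hu : u ∉ Branch T v x) (hw : w ∉ Branch T v x) (hτ : τ ∈ Branch T v x)
    (hd : T.dist v u ≠ T.dist v w) : Separates T τ u w := by
  have h1 := cross hT hvx hτ hu
  have h2 := cross hT hvx hτ hw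
  show T.dist τ u ≠ T.dist τ w
  omega

lemma sep_in_le (hT : T.IsTree) {v x : V} (hvx : T.Adj v x) {u w τ : V}
    (hu : u ∈ Branch T v x) (hw : w ∉ Branch T v x) (hτ : τ ∈ Branch T v x)
    (hd : T.dist v u ≤ T.dist v w) : Separates T τ u w := by
  have h2 := cross hT hvx hτ hw
  have h3 : T.dist x u = T.dist v u - 1 := dist_x_of_mem hT hu
  have h4 : T.dist x τ = T.dist v τ - 1 := dist_x_of_mem hT hτ
  have h5 : T.dist τ u ≤ T.dist τ x + T.dist x u := tri hT τ x u
  have h6 : 1 ≤ T.dist v u := branch_pos hu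
  have h7 : 1 ≤ T.dist v τ := branch_pos hτ
  show T.dist τ u ≠ T.dist τ w
  rw [dcomm τ x] at h5
  rw [dcomm τ v] at h2
  omega

lemma sep_in_gt (hT : T.IsTree) {v x : V} (hvx : T.Adj v x) {u w τ : V}
    (hu : u ∈ Branch T v x) (hw : w ∉ Branch T v x) (hτ : τ ∉ Branch T v x)
    (hd : T.dist v w < T.dist v u) : Separates T τ u w := by
  have h1 := cross hT hvx hu hτ
  have h2 : T.dist τ w ≤ T.dist τ v + T.dist v w := tri hT τ v w
  show T.dist τ u ≠ T.dist τ w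
  rw [dcomm u v] at h1
  rw [dcomm τ w, dcomm τ v] at h2
  rw [dcomm τ u, dcomm τ w]
  omega

lemma sep_in_in (hT : T.IsTree) {v x : V} (hvx : T.Adj v x) {u w τ : V}
    (hu : u ∈ Branch T v x) (hw : w ∈ Branch T v x) (hτ : τ ∉ Branch T v x)
    (hd : T.dist v u ≠ T.dist v w) : Separates T τ u w := by
  have h1 := cross hT hvx hu hτ
  have h2 := cross hT hvx hw hτ
  show T.dist τ u ≠ T.dist τ w
  rw [dcomm u v] at h1
  rw [dcomm w v] at h2
  rw [dcomm τ u, dcomm τ w]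
  omega

lemma hts_symm {L : Set V} {u w : V} (h : HasTwoSeparators T L u w) :
    HasTwoSeparators T L w u := by
  obtain ⟨τ₁, h1, τ₂, h2, hne, hs1, hs2⟩ := h
  exact ⟨τ₁, h1, τ₂, h2, hne, Ne.symm hs1, Ne.symm hs2⟩

lemma three_of_ncard {P : Set V} {w₁ w₂ : V} (h1 : w₁ ∈ P) (h2 : w₂ ∈ P)
    (hne : w₁ ≠ w₂) (hcard : P.ncard ≠ 2) : ∃ t₃ ∈ P, t₃ ≠ w₁ ∧ t₃ ≠ w₂ := by
  by_contra h
  push_neg at h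
  apply hcard
  have hPeq : P = {w₁, w₂} := by
    ext t
    simp only [Set.mem_insert_iff, Set.mem_singleton_iff]
    constructor
    · intro ht
      by_cases h1' : t = w₁
      · exact Or.inl h1'
      · exact Or.inr (h t ht h1')
    · rintro (rfl | rfl)
      exacts [h1, h2]
  rw [hPeq]
  exact Set.ncard_pair hne


/-- Master lemma: removing a landmark from an overfull branch keeps the landmark property,
provided equal-position pairs inside the branch are handled. -/
lemma master (hT : T.IsTree) {L : Set V} (hL : IsLandmarkSet T L) {v x : V}
    (hvx : T.Adj v x) {r : V} (hrB : r ∈ Branch T v x)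
    (hout : ∃ τ₁ τ₂ : V, τ₁ ∈ L ∧ τ₂ ∈ L ∧ τ₁ ≠ τ₂ ∧
      τ₁ ∉ Branch T v x ∧ τ₂ ∉ Branch T v x)
    (hrem : ∃ s₁ s₂ : V, s₁ ∈ L ∩ Branch T v x ∧ s₂ ∈ L ∩ Branch T v x ∧
      s₁ ≠ s₂ ∧ s₁ ≠ r ∧ s₂ ≠ r)
    (hpairs : ∀ u w : V, u ∈ Branch T v x → w ∈ Branch T v x → u ≠ w →
      T.dist v u = T.dist v w → u ∉ L \ {r} → w ∉ L \ {r} →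
      HasTwoSeparators T (L \ {r}) u w) :
    IsLandmarkSet T (L \ {r}) := by
  obtain ⟨τ₁, τ₂, hτ1L, hτ2L, hτne, hτ1B, hτ2B⟩ := hout
  obtain ⟨s₁, s₂, hs1, hs2, hsne, hs1r, hs2r⟩ := hrem
  have hτ1L' : τ₁ ∈ L \ {r} := ⟨hτ1L, by simp; intro h; rw [h] at hτ1B; exact hτ1B hrB⟩
  have hτ2L' : τ₂ ∈ L \ {r} := ⟨hτ2L, by simp; intro h; rw [h] at hτ2B; exact hτ2B hrB⟩
  have hs1L' : s₁ ∈ L \ {r} := ⟨hs1.1, by simpa using hs1r⟩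
  have hs2L' : s₂ ∈ L \ {r} := ⟨hs2.1, by simpa using hs2r⟩
  intro u w hne huL' hwL'
  by_cases hu : u ∈ Branch T v x
  · by_cases hw : w ∈ Branch T v x
    · -- both in the branch
      by_cases hd : T.dist v u = T.dist v w
      · exact hpairs u w hu hw hne hd huL' hwL'
      · exact ⟨τ₁, hτ1L', τ₂, hτ2L', hτne,
          sep_in_in hT hvx hu hw hτ1B hd, sep_in_in hT hvx hu hw hτ2B hd⟩
    · -- u in, w out
      rcases le_or_gt (T.dist v u) (T.dist v w) with hle | hgt
      · exact ⟨s₁, hs1L', s₂, hs2L', hsne,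
          sep_in_le hT hvx hu hw hs1.2 hle, sep_in_le hT hvx hu hw hs2.2 hle⟩
      · exact ⟨τ₁, hτ1L', τ₂, hτ2L', hτne,
          sep_in_gt hT hvx hu hw hτ1B hgt, sep_in_gt hT hvx hu hw hτ2B hgt⟩
  · by_cases hw : w ∈ Branch T v x
    · -- u out, w in : symmetric
      apply hts_symm
      rcases le_or_gt (T.dist v w) (T.dist v u) with hle | hgt
      · exact ⟨s₁, hs1L', s₂, hs2L', hsne,
          sep_in_le hT hvx hw hu hs1.2 hle, sep_in_le hT hvx hw hu hs2.2 hle⟩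
      · exact ⟨τ₁, hτ1L', τ₂, hτ2L', hτne,
          sep_in_gt hT hvx hw hu hτ1B hgt, sep_in_gt hT hvx hw hu hτ2B hgt⟩
    · -- both outside the branch
      have huL : u ∉ L := by
        intro h
        exact huL' ⟨h, by simp; intro heq; rw [heq] at hu; exact hu hrB⟩
      have hwL : w ∉ L := by
        intro h
        exact hwL' ⟨h, by simp; intro heq; rw [heq] at hw; exact hw hrB⟩
      obtain ⟨σ₁, hσ1L, σ₂, hσ2L, hσne, hσ1s, hσ2s⟩ := hL u w hne huL hwL
      by_cases hσ1r : σ₁ = r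
      · -- r separates u and w, so all branch landmarks do
        have hsepr : Separates T r u w := hσ1r ▸ hσ1s
        have hd : T.dist v u ≠ T.dist v w := by
          intro h
          apply hsepr
          have h1 := cross hT hvx hrB hu
          have h2 := cross hT hvx hrB hw
          omega
        exact ⟨s₁, hs1L', s₂, hs2L', hsne,
          sep_out_out hT hvx hu hw hs1.2 hd, sep_out_out hT hvx hu hw hs2.2 hd⟩
      · by_cases hσ2r : σ₂ = r
        · have hsepr : Separates T r u w := hσ2r ▸ hσ2s
          have hd : T.dist v u ≠ T.dist v w := by
            intro h
            apply hsepr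
            have h1 := cross hT hvx hrB hu
            have h2 := cross hT hvx hrB hw
            omega
          exact ⟨s₁, hs1L', s₂, hs2L', hsne,
            sep_out_out hT hvx hu hw hs1.2 hd, sep_out_out hT hvx hu hw hs2.2 hd⟩
        · exact ⟨σ₁, ⟨hσ1L, by simpa using hσ1r⟩, σ₂, ⟨hσ2L, by simpa using hσ2r⟩,
            hσne, hσ1s, hσ2s⟩


lemma pick_two {P : Set V} {t₁ t₂ t₃ : V} (h1 : t₁ ∈ P) (h2 : t₂ ∈ P) (h3 : t₃ ∈ P)
    (h12 : t₁ ≠ t₂) (h31 : t₃ ≠ t₁) (h32 : t₃ ≠ t₂) (r : V) :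
    ∃ s₁ s₂ : V, s₁ ∈ P ∧ s₂ ∈ P ∧ s₁ ≠ s₂ ∧ s₁ ≠ r ∧ s₂ ≠ r := by
  by_cases e1 : t₁ = r
  · exact ⟨t₂, t₃, h2, h3, Ne.symm h32, fun h => h12 (e1.trans h.symm), fun h => h31 (h.trans e1.symm)⟩
  · by_cases e2 : t₂ = r
    · exact ⟨t₁, t₃, h1, h3, Ne.symm h31, e1, fun h => h32 (h.trans e2.symm)⟩
    · exact ⟨t₁, t₂, h1, h2, h12, e1, e2⟩

end LMAux

theorem non_thrifty_landmark_not_minimal'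
    (T : SimpleGraph V) [DecidableRel T.Adj] (hT : T.IsTree)
    (L : Set V) (hL : IsLandmarkSet T L)
    (v : V) (hv : IsRegularCore T v)
    (hls : IsLocalSet T v (L ∩ GLegVerts T v))
    (hnt : ¬ IsThrifty T v (L ∩ GLegVerts T v)) :
    ∃ L' : Set V, L' ⊂ L ∧ IsLandmarkSet T L' := by
  classical
  open LMAux in
  rw [IsThrifty, not_and_or] at hnt
  rcases hnt with hA | hB
  · -- Case A : a standard leg with at least three landmarks
    push_neg at hA
    obtain ⟨x, hstd, hS2, hcard⟩ := hA
    have hvx : T.Adj v x := hstd.1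
    have hgleg : IsGLeg T v x := Or.inl hstd
    have hSB : (L ∩ GLegVerts T v) ∩ Branch T v x = L ∩ Branch T v x := by
      ext τ
      constructor
      · rintro ⟨⟨hτ1, _⟩, hτ2⟩; exact ⟨hτ1, hτ2⟩
      · rintro ⟨hτ1, hτ2⟩; exact ⟨⟨hτ1, ⟨x, hgleg, hτ2⟩⟩, hτ2⟩
    rw [hSB] at hcard
    obtain ⟨t₁, ht1, t₂, ht2, ht12⟩ := hS2
    rw [hSB] at ht1 ht2
    obtain ⟨t₃, ht3, ht31, ht32⟩ := LMAux.three_of_ncard ht1 ht2 ht12 hcard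
    refine ⟨L \ {t₁}, Set.sdiff_singleton_ssubset.mpr ht1.1, ?_⟩
    apply LMAux.master hT hL hvx ht1.2
    · exact LMAux.two_outside hT hL hv hls hvx ⟨t₁, ht1.1, ht1.2⟩
    · exact ⟨t₂, t₃, ht2, ht3, Ne.symm ht32, Ne.symm ht12, ht31⟩
    · intro u w hu hw hne heq _ _
      exact absurd (LMAux.std_pos_unique hT hstd (T.dist v u) hu hw rfl heq.symm) hne
  · -- Case B : a modified leg with at least three landmarks
    push_neg at hB
    obtain ⟨x, hmod, hsol, hcard⟩ := hB
    have hvx : T.Adj v x := hmod.1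
    have hgleg : IsGLeg T v x := Or.inr hmod
    have hSB : (L ∩ GLegVerts T v) ∩ Branch T v x = L ∩ Branch T v x := by
      ext τ
      constructor
      · rintro ⟨⟨hτ1, _⟩, hτ2⟩; exact ⟨hτ1, hτ2⟩
      · rintro ⟨hτ1, hτ2⟩; exact ⟨⟨hτ1, ⟨x, hgleg, hτ2⟩⟩, hτ2⟩
    rw [hSB] at hcard
    obtain ⟨c, a, b, hp, hw2⟩ : ∃ c a b : V, MLegPair T v x c a b ∧
        (∃ w₁ ∈ L ∩ Branch T v x, ∃ w₂ ∈ L ∩ Branch T v x, w₁ ≠ w₂) := by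
      rcases hsol with hm2 | hm3
      · obtain ⟨c, a, b, hp, _, _, ⟨w₁, hw1, w₂, hw2, hne', _, _⟩, _⟩ := hm2
        rw [hSB] at hw1 hw2
        exact ⟨c, a, b, hp, ⟨w₁, hw1, w₂, hw2, hne'⟩⟩
      · obtain ⟨c, a, b, hp, ⟨w₁, hw1, w₂, hw2, hne'⟩, _⟩ := hm3
        rw [hSB] at hw1 hw2
        exact ⟨c, a, b, hp, ⟨w₁, hw1, w₂, hw2, hne'⟩⟩
    obtain ⟨t₁, ht1, t₂, ht2, ht12⟩ := hw2
    obtain ⟨t₃, ht3, ht31, ht32⟩ := LMAux.three_of_ncard ht1 ht2 ht12 hcard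
    obtain ⟨hcB, hsmall, habne, haB, hbB, hapos, hbpos, hshort⟩ := hp
    obtain ⟨⟨hub, _⟩, hbshort⟩ := hshort
    have hdeg : T.degree c = 3 := hsmall.1
    have hcorec : IsCore T c := by show 3 ≤ T.degree c; omega
    have huniq : ∀ w ∈ Branch T v x, IsCore T w → w = c := by
      obtain ⟨_, c', hc'B, hc'small, hc'uniq⟩ := hmod
      intro w hw hcw
      exact (hc'uniq w hw hcw).trans (hc'uniq c hcB hcorec).symm
    -- choose the landmark r to remove
    have hmain : ∃ r : V, r ∈ L ∩ Branch T v x ∧ r ≠ a ∧ r ≠ b ∧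
        (T.dist v r < T.dist v c + 2 ∨
          ∀ t ∈ L ∩ Branch T v x, t ≠ a → t ≠ b → T.dist v c + 2 ≤ T.dist v t) := by
      by_cases hex : ∃ t, t ∈ L ∩ Branch T v x ∧ t ≠ a ∧ t ≠ b ∧
          T.dist v t < T.dist v c + 2
      · obtain ⟨r, hr, hra, hrb, hrlow⟩ := hex
        exact ⟨r, hr, hra, hrb, Or.inl hrlow⟩
      · push_neg at hex
        have hpick : ∃ t, t ∈ L ∩ Branch T v x ∧ t ≠ a ∧ t ≠ b := by
          by_cases h1a : t₁ = a
          · by_cases h2b : t₂ = b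
            · exact ⟨t₃, ht3, fun h => ht31 (h.trans h1a.symm),
                fun h => ht32 (h.trans h2b.symm)⟩
            · by_cases h2a : t₂ = a
              · exact absurd (h1a.trans h2a.symm) ht12
              · exact ⟨t₂, ht2, h2a, h2b⟩
          · by_cases h1b : t₁ = b
            · by_cases h2a : t₂ = a
              · exact ⟨t₃, ht3, fun h => ht32 (h.trans h2a.symm),
                  fun h => ht31 (h.trans h1b.symm)⟩
              · by_cases h2b : t₂ = b
                · exact absurd (h1b.trans h2b.symm) ht12
                · exact ⟨t₂, ht2, h2a, h2b⟩
            · exact ⟨t₁, ht1, h1a, h1b⟩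
        obtain ⟨r, hr, hra, hrb⟩ := hpick
        exact ⟨r, hr, hra, hrb, Or.inr (fun t ht hta htb => hex t ht hta htb)⟩
    obtain ⟨r, hr, hra, hrb, hcase⟩ := hmain
    -- the pair (a, b)
    have hpair_ab : a ∉ L \ {r} → b ∉ L \ {r} → HasTwoSeparators T (L \ {r}) a b := by
      intro haL' hbL'
      have haL : a ∉ L := fun h => haL' ⟨h, by simpa using Ne.symm hra⟩
      have hbL : b ∉ L := fun h => hbL' ⟨h, by simpa using Ne.symm hrb⟩
      rcases hcase with hlow | hforall
      · obtain ⟨σ₁, hσ1L, σ₂, hσ2L, hσne, hσ1s, hσ2s⟩ := hL a b habne haL hbL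
        have hloc : ∀ σ, σ ∈ L → Separates T σ a b →
            σ ∈ Branch T v x ∧ T.dist v c + 2 ≤ T.dist v σ := by
          intro σ hσL hσs
          by_cases hσB : σ ∈ Branch T v x
          · refine ⟨hσB, ?_⟩
            by_contra hlt
            push_neg at hlt
            rcases lt_or_ge (T.dist v σ) (T.dist v c + 1) with hlo | hhi
            · exact hσs (LMAux.mleg_N2low hT hvx hcB hcorec hdeg hub hbshort hbpos huniq
                habne haB hapos hσB (by omega))
            · have hσpos : T.dist v σ = T.dist v c + 1 := by omega
              by_cases hσa : σ = a
              · exact haL (hσa ▸ hσL)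
              · by_cases hσb : σ = b
                · exact hbL (hσb ▸ hσL)
                · exact hσa (LMAux.mod_pos_unique hT hvx hcB hcorec hdeg hub hbshort hbpos
                    huniq (T.dist v c + 1) hσB hσb haB habne hσpos hapos)
          · exact absurd (LMAux.mleg_N2out hT hvx hcB hcorec hdeg hub hbshort hbpos hbB huniq
              habne haB hapos hσB) hσs
        obtain ⟨hσ1B, hσ1p⟩ := hloc σ₁ hσ1L hσ1s
        obtain ⟨hσ2B, hσ2p⟩ := hloc σ₂ hσ2L hσ2s
        refine ⟨σ₁, ⟨hσ1L, ?_⟩, σ₂, ⟨hσ2L, ?_⟩, hσne, hσ1s, hσ2s⟩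
        · simp only [Set.mem_singleton_iff]
          intro h
          rw [h] at hσ1p
          omega
        · simp only [Set.mem_singleton_iff]
          intro h
          rw [h] at hσ2p
          omega
      · obtain ⟨s₁, s₂, hs1, hs2, hsne, hs1r, hs2r⟩ :=
          LMAux.pick_two ht1 ht2 ht3 ht12 ht31 ht32 r
        have hsep : ∀ {s : V}, s ∈ L ∩ Branch T v x → Separates T s a b := by
          intro s hs
          have hsa : s ≠ a := fun h => haL (h ▸ hs.1)
          have hsb : s ≠ b := fun h => hbL (h ▸ hs.1)
          have hspos := hforall s hs hsa hsb
          have := LMAux.mleg_N1 hT hvx hcB hcorec hdeg hub hbshort hbpos huniq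
            habne haB hapos hs.2 hspos
          show T.dist s a ≠ T.dist s b
          omega
        exact ⟨s₁, ⟨hs1.1, by simpa using hs1r⟩, s₂, ⟨hs2.1, by simpa using hs2r⟩,
          hsne, hsep hs1, hsep hs2⟩
    refine ⟨L \ {r}, Set.sdiff_singleton_ssubset.mpr hr.1, ?_⟩
    apply LMAux.master hT hL hvx hr.2
    · exact LMAux.two_outside hT hL hv hls hvx ⟨t₁, ht1.1, ht1.2⟩
    · exact LMAux.pick_two ht1 ht2 ht3 ht12 ht31 ht32 r
    · intro u w hu hw hne heq huL' hwL'
      rcases LMAux.mleg_N3 hT hvx hcB hcorec hdeg hub hbshort hbpos huniq habne haB hapos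
          hu hw hne heq with ⟨hua, hwb⟩ | ⟨hub', hwa⟩
      · subst hua; subst hwb
        exact hpair_ab huL' hwL'
      · subst hub'; subst hwa
        exact LMAux.hts_symm (hpair_ab hwL' huL')


/-- if the restriction of a landmark set `L` to the g-legs of a regular
core `v` is a local set that is not thrifty, then `L` is not minimal with respect to
set inclusion. -/
theorem non_thrifty_landmark_not_minimal
    (T : SimpleGraph V) [DecidableRel T.Adj] (hT : T.IsTree)
    (L : Set V) (hL : IsLandmarkSet T L)
    (v : V) (hv : IsRegularCore T v)
    (hls : IsLocalSet T v (L ∩ GLegVerts T v))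
    (hnt : ¬ IsThrifty T v (L ∩ GLegVerts T v)) :
    ∃ L' : Set V, L' ⊂ L ∧ IsLandmarkSet T L' := by
  exact non_thrifty_landmark_not_minimal' T hT L hL v hv hls hnt
end
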